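/- arXiv:1906.05082 — 2 statements merged into one kernel-verified Lean document; each statement's English description precedes it below -/
import Mathlib

section
/- Assume Assumption 1 and set b_s := ℙ(S=s), m_s := E_{X|S=s}[η(X,s)]. Suppose θ* ∈ ℝ both satisfies the balance equation for η and minimizes over λ ∈ ℝ the function φ_η(λ) := E_{X|S=1}[(b_1(2η(X,1)−1) − λ·η(X,1)/m_1)₊] + E_{X|S=0}[(b_0(2η(X,0)−1) + λ·η(X,0)/m_0)₊], and let g* be the associated threshold classifier g*(x,1) = 1{b_1(2η(x,1)−1) − θ*·η(x,1)/m_1 ≥ 0}, g*(x,0) = 1{b_0(2η(x,0)−1) + θ*·η(x,0)/m_0 ≥ 0}. Let η̂ : ℝ^d × {0,1} → [0,1] be measurable with m̂_s := E_{X|S=s}[η̂(X,s)] > 0, suppose θ̃ ∈ ℝ with |θ̃| ≤ 2 satisfies the analogous balance equation for η̂, and let g̃ be the associated threshold classifier g̃(x,1) = 1{b_1(2η̂(x,1)−1) − θ̃·η̂(x,1)/m̂_1 ≥ 0}, g̃(x,0) = 1{b_0(2η̂(x,0)−1) + θ̃·η̂(x,0)/m̂_0 ≥ 0}. Then R(g̃)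 − R(g*) ≤ 4·𝔼_{(X,S)}|η̂(X,S) − η(X,S)| + 4·E_{X|S=1}|η(X,1) − η̂(X,1)|/m_1 + 4·E_{X|S=0}|η(X,0) − η̂(X,0)|/m_0. -/
open MeasureTheory ProbabilityTheory Set

private lemma intbdd {Ω : Type*} [MeasurableSpace Ω] {μ : Measure Ω} [IsFiniteMeasure μ]
    {f : Ω → ℝ} (hf : Measurable f) (C : ℝ) (h : ∀ ω, |f ω| ≤ C) : Integrable f μ :=
  (integrable_const C).mono' hf.aestronglyMeasurable (ae_of_all _ fun ω => by
    simpa using h ω)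

private lemma cond_int {Ω : Type*} [MeasurableSpace Ω] (P : Measure Ω) [IsFiniteMeasure P]
    {A : Set Ω} (h0 : P A ≠ 0) (f : Ω → ℝ) :
    (P A).toReal * ∫ ω, f ω ∂(ProbabilityTheory.cond P A) = ∫ ω in A, f ω ∂P := by
  rw [show ProbabilityTheory.cond P A = (P A)⁻¹ • P.restrict A from rfl,
    integral_smul_measure, ENNReal.toReal_inv, smul_eq_mul, ← mul_assoc,
    mul_inv_cancel₀ (ENNReal.toReal_ne_zero.2 ⟨h0, measure_ne_top P A⟩), one_mul]

private lemma pick_pos {Ω : Type*} [MeasurableSpace Ω] (μ : Measure Ω) (u g : Ω → ℝ)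
    (hg : ∀ ω, (g ω = 1 ∧ 0 ≤ u ω) ∨ (g ω = 0 ∧ u ω < 0)) :
    ∫ ω, u ω * g ω ∂μ = ∫ ω, max (u ω) 0 ∂μ := by
  refine integral_congr_ae (ae_of_all _ fun ω => ?_)
  show u ω * g ω = max (u ω) 0
  rcases hg ω with ⟨h1, h2⟩ | ⟨h1, h2⟩
  · rw [h1, mul_one, max_eq_left h2]
  · rw [h1, mul_zero]; exact (max_eq_right h2.le).symm

private lemma absMaxLe (a : ℝ) : |max a 0| ≤ |a| := by
  rcases le_total a 0 with h | h
  · rw [max_eq_right h, abs_zero]; exact abs_nonneg a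
  · rw [max_eq_left h]

private lemma maxmax {a b c : ℝ} (h : |a - b| ≤ c) : max a 0 ≤ max b 0 + c := by
  rcases le_total a 0 with h1 | h1
  · rw [max_eq_right h1]
    have h2 := abs_nonneg (a - b); have h3 := le_max_right b 0; linarith
  · rw [max_eq_left h1]
    have h2 := le_abs_self (a - b); have h3 := le_max_left b 0; linarith

private lemma absMulInd {a C : ℝ} (p : Prop) [Decidable p] (ha : |a| ≤ C) :
    |a * (if p then (1:ℝ) else 0)| ≤ C := by
  by_cases h : p
  · simpa [h] using ha
  · simp only [h, if_false, mul_zero, abs_zero]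
    exact (abs_nonneg a).trans ha

private lemma absInd (p : Prop) [Decidable p] : |(if p then (1:ℝ) else 0)| ≤ 1 := by
  by_cases h : p <;> simp [h]

private lemma scoreBd_sub {x m c t : ℝ} (hx : 0 ≤ x) (hx1 : x ≤ 1) (hm : 0 < m) :
    |c * (2 * x - 1) - t * x / m| ≤ |c| + |t| / m := by
  have h1 : |c * (2 * x - 1)| ≤ |c| := by
    rw [abs_mul]
    have h : |2 * x - 1| ≤ 1 := abs_le.2 ⟨by linarith, by linarith⟩
    nlinarith [abs_nonneg c]
  have h2 : |t * x / m| ≤ |t| / m := by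
    rw [abs_div, abs_mul, abs_of_pos hm, abs_of_nonneg hx]
    have h : |t| * x ≤ |t| := by nlinarith [abs_nonneg t]
    have := mul_le_mul_of_nonneg_right h (le_of_lt (inv_pos.2 hm))
    simpa [div_eq_mul_inv] using this
  calc |c * (2 * x - 1) - t * x / m| ≤ |c * (2 * x - 1)| + |t * x / m| := abs_sub _ _
  _ ≤ |c| + |t| / m := by linarith

private lemma scoreBd_add {x m c t : ℝ} (hx : 0 ≤ x) (hx1 : x ≤ 1) (hm : 0 < m) :
    |c * (2 * x - 1) + t * x / m| ≤ |c| + |t| / m := by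
  have h := scoreBd_sub (c := c) (t := -t) hx hx1 hm
  rw [abs_neg] at h
  have he : c * (2 * x - 1) - -t * x / m = c * (2 * x - 1) + t * x / m := by ring
  rwa [he] at h

private lemma keybd_sub {e h m mh b t K : ℝ} (hm : 0 < m) (hmh : 0 < mh) (hb : 0 ≤ b)
    (ht : |t| ≤ 2) (hh : 0 ≤ h) (hK : K = |1 / m - 1 / mh|) :
    |(b * (2 * e - 1) - t * e / m) - (b * (2 * h - 1) - t * h / mh)|
      ≤ 2 * b * |e - h| + 2 / m * |e - h| + 2 * K * h := by
  have hid : (b * (2 * e - 1) - t * e / m) - (b * (2 * h - 1) - t * h / mh)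
      = 2 * b * (e - h) - t * ((e - h) * (1 / m) + h * (1 / m - 1 / mh)) := by ring
  rw [hid]
  have t1 : |2 * b * (e - h)| = 2 * b * |e - h| := by
    rw [abs_mul, abs_of_nonneg (by linarith : (0:ℝ) ≤ 2 * b)]
  have t2 : |(e - h) * (1 / m) + h * (1 / m - 1 / mh)| ≤ |e - h| * (1 / m) + h * K := by
    refine (abs_add_le _ _).trans ?_
    rw [abs_mul, abs_mul, abs_of_nonneg hh, abs_of_nonneg (le_of_lt (by positivity : (0:ℝ) < 1 / m)), hK]
  have t3 : |t * ((e - h) * (1 / m) + h * (1 / m - 1 / mh))|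
      ≤ 2 * (|e - h| * (1 / m) + h * K) := by
    rw [abs_mul]
    have h0 : (0:ℝ) ≤ |e - h| * (1 / m) + h * K := by
      have := abs_nonneg ((e - h) * (1 / m) + h * (1 / m - 1 / mh))
      linarith [t2]
    nlinarith [abs_nonneg t, abs_nonneg ((e - h) * (1 / m) + h * (1 / m - 1 / mh))]
  calc |2 * b * (e - h) - t * ((e - h) * (1 / m) + h * (1 / m - 1 / mh))|
      ≤ |2 * b * (e - h)| + |t * ((e - h) * (1 / m) + h * (1 / m - 1 / mh))| := abs_sub _ _
  _ ≤ 2 * b * |e - h| + 2 * (|e - h| * (1 / m) + h * K) := by rw [t1]; linarith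
  _ = 2 * b * |e - h| + 2 / m * |e - h| + 2 * K * h := by ring

private lemma keybd_add {e h m mh b t K : ℝ} (hm : 0 < m) (hmh : 0 < mh) (hb : 0 ≤ b)
    (ht : |t| ≤ 2) (hh : 0 ≤ h) (hK : K = |1 / m - 1 / mh|) :
    |(b * (2 * e - 1) + t * e / m) - (b * (2 * h - 1) + t * h / mh)|
      ≤ 2 * b * |e - h| + 2 / m * |e - h| + 2 * K * h := by
  have h' := keybd_sub (e := e) (h := h) (t := -t) hm hmh hb (by rwa [abs_neg]) hh hK
  have he : (b * (2 * e - 1) - -t * e / m) - (b * (2 * h - 1) - -t * h / mh)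
      = (b * (2 * e - 1) + t * e / m) - (b * (2 * h - 1) + t * h / mh) := by ring
  rwa [he] at h'

set_option maxHeartbeats 1000000 in
theorem stmt_17 {d : ℕ} {Ω : Type*} [MeasurableSpace Ω]
    (P : Measure Ω) [IsProbabilityMeasure P]
    (X : Ω → (Fin d → ℝ)) (S Y : Ω → Bool)
    (hX : Measurable X) (hS : Measurable S) (hY : Measurable Y)
    (hSnd : 0 < P {ω | S ω = true} ∧ P {ω | S ω = true} < 1)
    (hYnd : 0 < P {ω | Y ω = true} ∧ P {ω | Y ω = true} < 1)
    (η : (Fin d → ℝ) → Bool → ℝ)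
    (hηm : Measurable (fun p : (Fin d → ℝ) × Bool => η p.1 p.2))
    (hη01 : ∀ x s, η x s ∈ Icc (0:ℝ) 1)
    (hreg : ∀ φ : (Fin d → ℝ) × Bool → ℝ, Measurable φ → (∃ C, ∀ z, |φ z| ≤ C) →
      ∫ ω, (if Y ω then (1:ℝ) else 0) * φ (X ω, S ω) ∂P
        = ∫ ω, η (X ω) (S ω) * φ (X ω, S ω) ∂P)
    -- Assumption 1
    (hcont : ∀ s : Bool, ContinuousOn
      (fun t : ℝ =>
        (ProbabilityTheory.cond P {ω | S ω = s} {ω | η (X ω) (S ω) ≤ t}).toReal)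
      (Ioo (0:ℝ) 1))
    (hhalf : ∀ s : Bool,
      0 < ProbabilityTheory.cond P {ω | S ω = s} {ω | 1 / 2 ≤ η (X ω) s})
    -- named quantities
    (b1 b0 m1 m0 : ℝ)
    (hb1 : b1 = (P {ω | S ω = true}).toReal)
    (hb0 : b0 = (P {ω | S ω = false}).toReal)
    (hm1 : m1 = ∫ ω, η (X ω) true ∂(ProbabilityTheory.cond P {ω | S ω = true}))
    (hm0 : m0 = ∫ ω, η (X ω) false ∂(ProbabilityTheory.cond P {ω | S ω = false}))
    (hm1pos : 0 < m1) (hm0pos : 0 < m0)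
    -- θ* and the optimal classifier g*
    (θs : ℝ)
    (gstar : (Fin d → ℝ) → Bool → Bool)
    (hgstar1 : ∀ x, gstar x true = true
      ↔ 0 ≤ b1 * (2 * η x true - 1) - θs * η x true / m1)
    (hgstar0 : ∀ x, gstar x false = true
      ↔ 0 ≤ b0 * (2 * η x false - 1) + θs * η x false / m0)
    (hbalstar :
      (∫ ω, η (X ω) true * (if gstar (X ω) true then (1:ℝ) else 0)
          ∂(ProbabilityTheory.cond P {ω | S ω = true})) / m1
        = (∫ ω, η (X ω) false * (if gstar (X ω) false then (1:ℝ) else 0)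
          ∂(ProbabilityTheory.cond P {ω | S ω = false})) / m0)
    (hminstar : ∀ lam : ℝ,
      (∫ ω, max (b1 * (2 * η (X ω) true - 1) - θs * η (X ω) true / m1) 0
          ∂(ProbabilityTheory.cond P {ω | S ω = true}))
        + (∫ ω, max (b0 * (2 * η (X ω) false - 1) + θs * η (X ω) false / m0) 0
          ∂(ProbabilityTheory.cond P {ω | S ω = false}))
      ≤ (∫ ω, max (b1 * (2 * η (X ω) true - 1) - lam * η (X ω) true / m1) 0
          ∂(ProbabilityTheory.cond P {ω | S ω = true}))
        + (∫ ω, max (b0 * (2 * η (X ω) false - 1) + lam * η (X ω) false / m0) 0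
          ∂(ProbabilityTheory.cond P {ω | S ω = false})))
    -- the estimator and the pseudo-oracle
    (ηh : (Fin d → ℝ) → Bool → ℝ)
    (hηhm : Measurable (fun p : (Fin d → ℝ) × Bool => ηh p.1 p.2))
    (hηh01 : ∀ x s, ηh x s ∈ Icc (0:ℝ) 1)
    (mh1 mh0 : ℝ)
    (hmh1 : mh1 = ∫ ω, ηh (X ω) true ∂(ProbabilityTheory.cond P {ω | S ω = true}))
    (hmh0 : mh0 = ∫ ω, ηh (X ω) false ∂(ProbabilityTheory.cond P {ω | S ω = false}))
    (hmh1pos : 0 < mh1) (hmh0pos : 0 < mh0)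
    (θt : ℝ) (hθt : |θt| ≤ 2)
    (gtil : (Fin d → ℝ) → Bool → Bool)
    (hgtil1 : ∀ x, gtil x true = true
      ↔ 0 ≤ b1 * (2 * ηh x true - 1) - θt * ηh x true / mh1)
    (hgtil0 : ∀ x, gtil x false = true
      ↔ 0 ≤ b0 * (2 * ηh x false - 1) + θt * ηh x false / mh0)
    (hbaltil :
      (∫ ω, ηh (X ω) true * (if gtil (X ω) true then (1:ℝ) else 0)
          ∂(ProbabilityTheory.cond P {ω | S ω = true})) / mh1
        = (∫ ω, ηh (X ω) false * (if gtil (X ω) false then (1:ℝ) else 0)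
          ∂(ProbabilityTheory.cond P {ω | S ω = false})) / mh0) :
    (P {ω | gtil (X ω) (S ω) ≠ Y ω}).toReal - (P {ω | gstar (X ω) (S ω) ≠ Y ω}).toReal
      ≤ 4 * (∫ ω, |ηh (X ω) (S ω) - η (X ω) (S ω)| ∂P)
        + 4 * (∫ ω, |η (X ω) true - ηh (X ω) true|
            ∂(ProbabilityTheory.cond P {ω | S ω = true})) / m1
        + 4 * (∫ ω, |η (X ω) false - ηh (X ω) false|
            ∂(ProbabilityTheory.cond P {ω | S ω = false})) / m0 := by
  obtain ⟨hA0, hA1⟩ := hSnd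
  set A : Set Ω := {ω | S ω = true} with hAdef
  set B : Set Ω := {ω | S ω = false} with hBdef
  have hAm : MeasurableSet A := hS (measurableSet_singleton true)
  have hBc : B = Aᶜ := by
    rw [hAdef, hBdef]; ext ω; simp [Bool.not_eq_true]
  have hB0 : P B ≠ 0 := by
    rw [hBc, prob_compl_eq_one_sub hAm]
    intro h; exact absurd (tsub_eq_zero_iff_le.mp h) (not_le.2 hA1)
  set μ1 : Measure Ω := ProbabilityTheory.cond P A with hμ1
  set μ0 : Measure Ω := ProbabilityTheory.cond P B with hμ0
  haveI iP1 : IsProbabilityMeasure μ1 := by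
    rw [hμ1]; exact cond_isProbabilityMeasure hA0.ne'
  haveI iP0 : IsProbabilityMeasure μ0 := by
    rw [hμ0]; exact cond_isProbabilityMeasure hB0
  -- basic bounds
  have hb1nn : 0 ≤ b1 := hb1 ▸ ENNReal.toReal_nonneg
  have hb0nn : 0 ≤ b0 := hb0 ▸ ENNReal.toReal_nonneg
  have hη0 : ∀ x s, 0 ≤ η x s := fun x s => (hη01 x s).1
  have hη1 : ∀ x s, η x s ≤ 1 := fun x s => (hη01 x s).2
  have hh0 : ∀ x s, 0 ≤ ηh x s := fun x s => (hηh01 x s).1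
  have hh1 : ∀ x s, ηh x s ≤ 1 := fun x s => (hηh01 x s).2
  have habsη : ∀ x s, |η x s| ≤ 1 := fun x s => abs_le.2 ⟨by linarith [hη0 x s], hη1 x s⟩
  have habsh : ∀ x s, |ηh x s| ≤ 1 := fun x s => abs_le.2 ⟨by linarith [hh0 x s], hh1 x s⟩
  have habsd : ∀ x s, |η x s - ηh x s| ≤ 2 := fun x s =>
    abs_le.2 ⟨by linarith [hη0 x s, hh1 x s], by linarith [hη1 x s, hh0 x s]⟩
  have habsd' : ∀ x s, |ηh x s - η x s| ≤ 2 := fun x s =>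
    abs_le.2 ⟨by linarith [hh0 x s, hη1 x s], by linarith [hh1 x s, hη0 x s]⟩
  -- measurability
  have mxe1 : Measurable fun x => η x true := hηm.comp (measurable_id.prodMk measurable_const)
  have mxe0 : Measurable fun x => η x false := hηm.comp (measurable_id.prodMk measurable_const)
  have mxh1 : Measurable fun x => ηh x true := hηhm.comp (measurable_id.prodMk measurable_const)
  have mxh0 : Measurable fun x => ηh x false := hηhm.comp (measurable_id.prodMk measurable_const)
  have me1 : Measurable fun ω => η (X ω) true := mxe1.comp hX
  have me0 : Measurable fun ω => η (X ω) false := mxe0.comp hX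
  have mhf1 : Measurable fun ω => ηh (X ω) true := mxh1.comp hX
  have mhf0 : Measurable fun ω => ηh (X ω) false := mxh0.comp hX
  have meS : Measurable fun ω => η (X ω) (S ω) := hηm.comp (hX.prodMk hS)
  have mhS : Measurable fun ω => ηh (X ω) (S ω) := hηhm.comp (hX.prodMk hS)
  have mU1 : Measurable fun x => b1 * (2 * η x true - 1) - θs * η x true / m1 :=
    (((mxe1.const_mul 2).sub measurable_const).const_mul b1).sub
      ((mxe1.const_mul θs).div_const m1)
  have mU0 : Measurable fun x => b0 * (2 * η x false - 1) + θs * η x false / m0 :=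
    (((mxe0.const_mul 2).sub measurable_const).const_mul b0).add
      ((mxe0.const_mul θs).div_const m0)
  have mW1 : Measurable fun x => b1 * (2 * η x true - 1) - θt * η x true / m1 :=
    (((mxe1.const_mul 2).sub measurable_const).const_mul b1).sub
      ((mxe1.const_mul θt).div_const m1)
  have mW0 : Measurable fun x => b0 * (2 * η x false - 1) + θt * η x false / m0 :=
    (((mxe0.const_mul 2).sub measurable_const).const_mul b0).add
      ((mxe0.const_mul θt).div_const m0)
  have mV1 : Measurable fun x => b1 * (2 * ηh x true - 1) - θt * ηh x true / mh1 :=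
    (((mxh1.const_mul 2).sub measurable_const).const_mul b1).sub
      ((mxh1.const_mul θt).div_const mh1)
  have mV0 : Measurable fun x => b0 * (2 * ηh x false - 1) + θt * ηh x false / mh0 :=
    (((mxh0.const_mul 2).sub measurable_const).const_mul b0).add
      ((mxh0.const_mul θt).div_const mh0)
  have hsetG1 : MeasurableSet {x | gstar x true = true} := by
    have h : {x | gstar x true = true}
        = {x | 0 ≤ b1 * (2 * η x true - 1) - θs * η x true / m1} :=
      Set.ext fun x => hgstar1 x
    rw [h]; exact measurableSet_le measurable_const mU1
  have hsetG0 : MeasurableSet {x | gstar x false = true} := by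
    have h : {x | gstar x false = true}
        = {x | 0 ≤ b0 * (2 * η x false - 1) + θs * η x false / m0} :=
      Set.ext fun x => hgstar0 x
    rw [h]; exact measurableSet_le measurable_const mU0
  have hsetT1 : MeasurableSet {x | gtil x true = true} := by
    have h : {x | gtil x true = true}
        = {x | 0 ≤ b1 * (2 * ηh x true - 1) - θt * ηh x true / mh1} :=
      Set.ext fun x => hgtil1 x
    rw [h]; exact measurableSet_le measurable_const mV1
  have hsetT0 : MeasurableSet {x | gtil x false = true} := by
    have h : {x | gtil x false = true}
        = {x | 0 ≤ b0 * (2 * ηh x false - 1) + θt * ηh x false / mh0} :=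
      Set.ext fun x => hgtil0 x
    rw [h]; exact measurableSet_le measurable_const mV0
  have mG1x : Measurable fun x => if gstar x true then (1:ℝ) else 0 :=
    Measurable.ite hsetG1 measurable_const measurable_const
  have mG0x : Measurable fun x => if gstar x false then (1:ℝ) else 0 :=
    Measurable.ite hsetG0 measurable_const measurable_const
  have mT1x : Measurable fun x => if gtil x true then (1:ℝ) else 0 :=
    Measurable.ite hsetT1 measurable_const measurable_const
  have mT0x : Measurable fun x => if gtil x false then (1:ℝ) else 0 :=
    Measurable.ite hsetT0 measurable_const measurable_const
  have mGpx : Measurable fun p : (Fin d → ℝ) × Bool => if gstar p.1 p.2 then (1:ℝ) else 0 := by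
    have h : (fun p : (Fin d → ℝ) × Bool => if gstar p.1 p.2 then (1:ℝ) else 0)
        = fun p => if p.2 = true then (if gstar p.1 true then (1:ℝ) else 0)
            else (if gstar p.1 false then (1:ℝ) else 0) := by
      funext p; rcases p with ⟨x, s⟩; cases s <;> simp
    rw [h]
    exact Measurable.ite (measurable_snd (measurableSet_singleton true))
      (mG1x.comp measurable_fst) (mG0x.comp measurable_fst)
  have mTpx : Measurable fun p : (Fin d → ℝ) × Bool => if gtil p.1 p.2 then (1:ℝ) else 0 := by
    have h : (fun p : (Fin d → ℝ) × Bool => if gtil p.1 p.2 then (1:ℝ) else 0)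
        = fun p => if p.2 = true then (if gtil p.1 true then (1:ℝ) else 0)
            else (if gtil p.1 false then (1:ℝ) else 0) := by
      funext p; rcases p with ⟨x, s⟩; cases s <;> simp
    rw [h]
    exact Measurable.ite (measurable_snd (measurableSet_singleton true))
      (mT1x.comp measurable_fst) (mT0x.comp measurable_fst)
  have mGS : Measurable fun ω => if gstar (X ω) (S ω) then (1:ℝ) else 0 :=
    mGpx.comp (hX.prodMk hS)
  have mTS : Measurable fun ω => if gtil (X ω) (S ω) then (1:ℝ) else 0 :=
    mTpx.comp (hX.prodMk hS)
  -- splitting an integral over the two groups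
  have hsplit : ∀ (F F1 F0 : Ω → ℝ), Integrable F P →
      (∀ ω, S ω = true → F ω = F1 ω) → (∀ ω, S ω = false → F ω = F0 ω) →
      ∫ ω, F ω ∂P = b1 * ∫ ω, F1 ω ∂μ1 + b0 * ∫ ω, F0 ω ∂μ0 := by
    intro F F1 F0 hFi hT hF
    have e1 : ∫ ω in A, F ω ∂P = ∫ ω in A, F1 ω ∂P :=
      setIntegral_congr_fun hAm fun ω hω => hT ω hω
    have e0 : ∫ ω in Aᶜ, F ω ∂P = ∫ ω in Aᶜ, F0 ω ∂P :=
      setIntegral_congr_fun hAm.compl fun ω hω => by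
        have hne : S ω ≠ true := hω
        exact hF ω (by simpa using hne)
    rw [hμ1, hμ0, hb1, hb0, cond_int P hA0.ne' F1, cond_int P hB0 F0, hBc,
      ← e1, ← e0, integral_add_compl hAm hFi]
  -- risk formula
  have hrisk : ∀ g : (Fin d → ℝ) → Bool → Bool,
      Measurable (fun p : (Fin d → ℝ) × Bool => if g p.1 p.2 then (1:ℝ) else 0) →
      (P {ω | g (X ω) (S ω) ≠ Y ω}).toReal
        = (∫ ω, η (X ω) (S ω) ∂P)
          + ∫ ω, (1 - 2 * η (X ω) (S ω)) * (if g (X ω) (S ω) then (1:ℝ) else 0) ∂P := by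
    intro g hGp
    have hGm : Measurable fun ω => (if g (X ω) (S ω) then (1:ℝ) else 0) :=
      hGp.comp (hX.prodMk hS)
    have hIYm : Measurable fun ω => (if Y ω then (1:ℝ) else 0) :=
      Measurable.ite (hY (measurableSet_singleton true)) measurable_const measurable_const
    have hMset : MeasurableSet {ω | g (X ω) (S ω) ≠ Y ω} := by
      have hset : {ω | g (X ω) (S ω) ≠ Y ω}
          = {ω | (if g (X ω) (S ω) then (1:ℝ) else 0) = (if Y ω then (1:ℝ) else 0)}ᶜ := by
        ext ω
        rcases Bool.eq_false_or_eq_true (g (X ω) (S ω)) with hb | hb <;>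
          rcases Bool.eq_false_or_eq_true (Y ω) with hy | hy <;>
            simp [Set.mem_setOf_eq, hb, hy]
      rw [hset]; exact (measurableSet_eq_fun hGm hIYm).compl
    have iG : Integrable (fun ω => (if g (X ω) (S ω) then (1:ℝ) else 0)) P :=
      intbdd hGm 1 fun ω => absInd _
    have iIY2 : Integrable (fun ω => (if Y ω then (1:ℝ) else 0)
        * (1 - 2 * (if g (X ω) (S ω) then (1:ℝ) else 0))) P := by
      refine intbdd (hIYm.mul (measurable_const.sub (hGm.const_mul 2))) 3 fun ω => ?_
      by_cases h1 : Y ω = true <;> by_cases h2 : g (X ω) (S ω) = true <;>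
        simp [h1, h2] <;> norm_num
    have ieS : Integrable (fun ω => η (X ω) (S ω)) P := intbdd meS 1 fun ω => habsη _ _
    have ieG : Integrable (fun ω => η (X ω) (S ω)
        * (1 - 2 * (if g (X ω) (S ω) then (1:ℝ) else 0))) P := by
      refine intbdd (meS.mul (measurable_const.sub (hGm.const_mul 2))) 3 fun ω => ?_
      rw [abs_mul]
      have h2 : |1 - 2 * (if g (X ω) (S ω) then (1:ℝ) else 0)| ≤ 3 := by
        by_cases h : g (X ω) (S ω) = true <;> simp [h] <;> norm_num
      nlinarith [habsη (X ω) (S ω), abs_nonneg (η (X ω) (S ω)),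
        abs_nonneg (1 - 2 * (if g (X ω) (S ω) then (1:ℝ) else 0))]
    have i2G : Integrable (fun ω => (1 - 2 * η (X ω) (S ω))
        * (if g (X ω) (S ω) then (1:ℝ) else 0)) P := by
      refine intbdd ((measurable_const.sub (meS.const_mul 2)).mul hGm) 3 fun ω => ?_
      refine absMulInd _ ?_
      have h := abs_le.1 (habsη (X ω) (S ω))
      exact abs_le.2 ⟨by linarith [h.1, h.2], by linarith [h.1, h.2]⟩
    have hIind : ∀ ω, ({ω | g (X ω) (S ω) ≠ Y ω} : Set Ω).indicator 1 ω
        = (if g (X ω) (S ω) then (1:ℝ) else 0)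
          + (if Y ω then (1:ℝ) else 0) * (1 - 2 * (if g (X ω) (S ω) then (1:ℝ) else 0)) := by
      intro ω
      rw [Set.indicator_apply]
      rcases Bool.eq_false_or_eq_true (g (X ω) (S ω)) with hb | hb <;>
        rcases Bool.eq_false_or_eq_true (Y ω) with hy | hy <;>
          simp [Set.mem_setOf_eq, hb, hy] <;> norm_num
    have hY2 := hreg (fun p => 1 - 2 * (if g p.1 p.2 then (1:ℝ) else 0))
      (measurable_const.sub (hGp.const_mul 2))
      ⟨3, fun z => by by_cases h : g z.1 z.2 = true <;> simp [h] <;> norm_num⟩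
    simp only [] at hY2
    calc (P {ω | g (X ω) (S ω) ≠ Y ω}).toReal
        = ∫ ω, ({ω | g (X ω) (S ω) ≠ Y ω} : Set Ω).indicator 1 ω ∂P :=
          (integral_indicator_one hMset).symm
      _ = ∫ ω, ((if g (X ω) (S ω) then (1:ℝ) else 0)
            + (if Y ω then (1:ℝ) else 0)
              * (1 - 2 * (if g (X ω) (S ω) then (1:ℝ) else 0))) ∂P :=
          integral_congr_ae (ae_of_all _ hIind)
      _ = (∫ ω, (if g (X ω) (S ω) then (1:ℝ) else 0) ∂P)
            + ∫ ω, (if Y ω then (1:ℝ) else 0)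
              * (1 - 2 * (if g (X ω) (S ω) then (1:ℝ) else 0)) ∂P := integral_add iG iIY2
      _ = (∫ ω, (if g (X ω) (S ω) then (1:ℝ) else 0) ∂P)
            + ∫ ω, η (X ω) (S ω)
              * (1 - 2 * (if g (X ω) (S ω) then (1:ℝ) else 0)) ∂P := by rw [hY2]
      _ = ∫ ω, ((if g (X ω) (S ω) then (1:ℝ) else 0)
            + η (X ω) (S ω) * (1 - 2 * (if g (X ω) (S ω) then (1:ℝ) else 0))) ∂P :=
          (integral_add iG ieG).symm
      _ = ∫ ω, (η (X ω) (S ω)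
            + (1 - 2 * η (X ω) (S ω)) * (if g (X ω) (S ω) then (1:ℝ) else 0)) ∂P :=
          integral_congr_ae (ae_of_all _ fun ω => by ring)
      _ = _ := integral_add ieS i2G
  have hR1 := hrisk gstar mGpx
  have hR2 := hrisk gtil mTpx
  -- selection properties of the threshold classifiers
  have hselG1 : ∀ ω, ((if gstar (X ω) true then (1:ℝ) else 0) = 1
      ∧ 0 ≤ b1 * (2 * η (X ω) true - 1) - θs * η (X ω) true / m1)
      ∨ ((if gstar (X ω) true then (1:ℝ) else 0) = 0
      ∧ b1 * (2 * η (X ω) true - 1) - θs * η (X ω) true / m1 < 0) := by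
    intro ω
    by_cases h : gstar (X ω) true = true
    · exact Or.inl ⟨if_pos h, (hgstar1 (X ω)).1 h⟩
    · exact Or.inr ⟨if_neg h, not_le.1 fun hle => h ((hgstar1 (X ω)).2 hle)⟩
  have hselG0 : ∀ ω, ((if gstar (X ω) false then (1:ℝ) else 0) = 1
      ∧ 0 ≤ b0 * (2 * η (X ω) false - 1) + θs * η (X ω) false / m0)
      ∨ ((if gstar (X ω) false then (1:ℝ) else 0) = 0
      ∧ b0 * (2 * η (X ω) false - 1) + θs * η (X ω) false / m0 < 0) := by
    intro ω
    by_cases h : gstar (X ω) false = true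
    · exact Or.inl ⟨if_pos h, (hgstar0 (X ω)).1 h⟩
    · exact Or.inr ⟨if_neg h, not_le.1 fun hle => h ((hgstar0 (X ω)).2 hle)⟩
  have hselT1 : ∀ ω, ((if gtil (X ω) true then (1:ℝ) else 0) = 1
      ∧ 0 ≤ b1 * (2 * ηh (X ω) true - 1) - θt * ηh (X ω) true / mh1)
      ∨ ((if gtil (X ω) true then (1:ℝ) else 0) = 0
      ∧ b1 * (2 * ηh (X ω) true - 1) - θt * ηh (X ω) true / mh1 < 0) := by
    intro ω
    by_cases h : gtil (X ω) true = true
    · exact Or.inl ⟨if_pos h, (hgtil1 (X ω)).1 h⟩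
    · exact Or.inr ⟨if_neg h, not_le.1 fun hle => h ((hgtil1 (X ω)).2 hle)⟩
  have hselT0 : ∀ ω, ((if gtil (X ω) false then (1:ℝ) else 0) = 1
      ∧ 0 ≤ b0 * (2 * ηh (X ω) false - 1) + θt * ηh (X ω) false / mh0)
      ∨ ((if gtil (X ω) false then (1:ℝ) else 0) = 0
      ∧ b0 * (2 * ηh (X ω) false - 1) + θt * ηh (X ω) false / mh0 < 0) := by
    intro ω
    by_cases h : gtil (X ω) false = true
    · exact Or.inl ⟨if_pos h, (hgtil0 (X ω)).1 h⟩
    · exact Or.inr ⟨if_neg h, not_le.1 fun hle => h ((hgtil0 (X ω)).2 hle)⟩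
  -- integrability (group 1)
  have ie1int : Integrable (fun ω => η (X ω) true) μ1 := intbdd me1 1 fun ω => habsη _ _
  have ih1int : Integrable (fun ω => ηh (X ω) true) μ1 := intbdd mhf1 1 fun ω => habsh _ _
  have iAbs1 : Integrable (fun ω => |η (X ω) true - ηh (X ω) true|) μ1 :=
    intbdd (me1.sub mhf1).abs 2 fun ω => by rw [abs_abs]; exact habsd _ _
  have iNegAbs1 : Integrable (fun ω => -|η (X ω) true - ηh (X ω) true|) μ1 :=
    intbdd (me1.sub mhf1).abs.neg 2 fun ω => by rw [abs_neg, abs_abs]; exact habsd _ _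
  have iE1' : Integrable (fun ω => (η (X ω) true - ηh (X ω) true)
      * (if gtil (X ω) true then (1:ℝ) else 0)) μ1 :=
    intbdd ((me1.sub mhf1).mul (mT1x.comp hX)) 2 fun ω => absMulInd _ (habsd _ _)
  have iU1G1 : Integrable (fun ω => (-1 : ℝ)
      * ((b1 * (2 * η (X ω) true - 1) - θs * η (X ω) true / m1)
        * (if gstar (X ω) true then (1:ℝ) else 0))) μ1 := by
    refine intbdd (((mU1.comp hX).mul (mG1x.comp hX)).const_mul (-1))
      (|b1| + |θs| / m1) fun ω => ?_
    rw [abs_mul, abs_neg, abs_one, one_mul]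
    exact absMulInd _ (scoreBd_sub (hη0 _ _) (hη1 _ _) hm1pos)
  have ie1G1 : Integrable (fun ω => (-(θs / m1))
      * (η (X ω) true * (if gstar (X ω) true then (1:ℝ) else 0))) μ1 := by
    refine intbdd ((me1.mul (mG1x.comp hX)).const_mul _) (|(-(θs / m1))| * 1) fun ω => ?_
    rw [abs_mul]
    gcongr
    exact absMulInd _ (habsη _ _)
  have iV1T1 : Integrable (fun ω => (-1 : ℝ)
      * ((b1 * (2 * ηh (X ω) true - 1) - θt * ηh (X ω) true / mh1)
        * (if gtil (X ω) true then (1:ℝ) else 0))) μ1 := by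
    refine intbdd (((mV1.comp hX).mul (mT1x.comp hX)).const_mul (-1))
      (|b1| + |θt| / mh1) fun ω => ?_
    rw [abs_mul, abs_neg, abs_one, one_mul]
    exact absMulInd _ (scoreBd_sub (hh0 _ _) (hh1 _ _) hmh1pos)
  have iErr1N : Integrable (fun ω => (-(2 * b1))
      * ((η (X ω) true - ηh (X ω) true) * (if gtil (X ω) true then (1:ℝ) else 0))) μ1 := by
    refine intbdd (((me1.sub mhf1).mul (mT1x.comp hX)).const_mul _)
      (|(-(2 * b1))| * 2) fun ω => ?_
    rw [abs_mul]
    gcongr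
    exact absMulInd _ (habsd _ _)
  have ihT1N : Integrable (fun ω => (-(θt / mh1))
      * (ηh (X ω) true * (if gtil (X ω) true then (1:ℝ) else 0))) μ1 := by
    refine intbdd ((mhf1.mul (mT1x.comp hX)).const_mul _) (|(-(θt / mh1))| * 1) fun ω => ?_
    rw [abs_mul]
    gcongr
    exact absMulInd _ (habsh _ _)
  have iMaxU1 : Integrable (fun ω =>
      max (b1 * (2 * η (X ω) true - 1) - θs * η (X ω) true / m1) 0) μ1 :=
    intbdd ((mU1.comp hX).max measurable_const) (|b1| + |θs| / m1) fun ω =>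
      (absMaxLe _).trans (scoreBd_sub (hη0 _ _) (hη1 _ _) hm1pos)
  have iMaxW1 : Integrable (fun ω =>
      max (b1 * (2 * η (X ω) true - 1) - θt * η (X ω) true / m1) 0) μ1 :=
    intbdd ((mW1.comp hX).max measurable_const) (|b1| + |θt| / m1) fun ω =>
      (absMaxLe _).trans (scoreBd_sub (hη0 _ _) (hη1 _ _) hm1pos)
  have iMaxV1 : Integrable (fun ω =>
      max (b1 * (2 * ηh (X ω) true - 1) - θt * ηh (X ω) true / mh1) 0) μ1 :=
    intbdd ((mV1.comp hX).max measurable_const) (|b1| + |θt| / mh1) fun ω =>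
      (absMaxLe _).trans (scoreBd_sub (hh0 _ _) (hh1 _ _) hmh1pos)
  have iR1a : Integrable (fun ω => 2 * b1 * |η (X ω) true - ηh (X ω) true|) μ1 := by
    refine intbdd ((me1.sub mhf1).abs.const_mul _) (|2 * b1| * 2) fun ω => ?_
    rw [abs_mul, abs_abs]
    gcongr
    exact habsd _ _
  have iR1b : Integrable (fun ω => 2 / m1 * |η (X ω) true - ηh (X ω) true|) μ1 := by
    refine intbdd ((me1.sub mhf1).abs.const_mul _) (|2 / m1| * 2) fun ω => ?_
    rw [abs_mul, abs_abs]
    gcongr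
    exact habsd _ _
  have iR1c : Integrable (fun ω => 2 * |1 / m1 - 1 / mh1| * ηh (X ω) true) μ1 := by
    refine intbdd (mhf1.const_mul _) (abs (2 * |1 / m1 - 1 / mh1|) * 1) fun ω => ?_
    rw [abs_mul]
    gcongr
    exact habsh _ _
  -- integrability (group 0)
  have ie0int : Integrable (fun ω => η (X ω) false) μ0 := intbdd me0 1 fun ω => habsη _ _
  have ih0int : Integrable (fun ω => ηh (X ω) false) μ0 := intbdd mhf0 1 fun ω => habsh _ _
  have iAbs0 : Integrable (fun ω => |η (X ω) false - ηh (X ω) false|) μ0 :=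
    intbdd (me0.sub mhf0).abs 2 fun ω => by rw [abs_abs]; exact habsd _ _
  have iNegAbs0 : Integrable (fun ω => -|η (X ω) false - ηh (X ω) false|) μ0 :=
    intbdd (me0.sub mhf0).abs.neg 2 fun ω => by rw [abs_neg, abs_abs]; exact habsd _ _
  have iE0' : Integrable (fun ω => (η (X ω) false - ηh (X ω) false)
      * (if gtil (X ω) false then (1:ℝ) else 0)) μ0 :=
    intbdd ((me0.sub mhf0).mul (mT0x.comp hX)) 2 fun ω => absMulInd _ (habsd _ _)
  have iU0G0 : Integrable (fun ω => (-1 : ℝ)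
      * ((b0 * (2 * η (X ω) false - 1) + θs * η (X ω) false / m0)
        * (if gstar (X ω) false then (1:ℝ) else 0))) μ0 := by
    refine intbdd (((mU0.comp hX).mul (mG0x.comp hX)).const_mul (-1))
      (|b0| + |θs| / m0) fun ω => ?_
    rw [abs_mul, abs_neg, abs_one, one_mul]
    exact absMulInd _ (scoreBd_add (hη0 _ _) (hη1 _ _) hm0pos)
  have ie0G0 : Integrable (fun ω => (θs / m0)
      * (η (X ω) false * (if gstar (X ω) false then (1:ℝ) else 0))) μ0 := by
    refine intbdd ((me0.mul (mG0x.comp hX)).const_mul _) (|(θs / m0)| * 1) fun ω => ?_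
    rw [abs_mul]
    gcongr
    exact absMulInd _ (habsη _ _)
  have iV0T0 : Integrable (fun ω => (-1 : ℝ)
      * ((b0 * (2 * ηh (X ω) false - 1) + θt * ηh (X ω) false / mh0)
        * (if gtil (X ω) false then (1:ℝ) else 0))) μ0 := by
    refine intbdd (((mV0.comp hX).mul (mT0x.comp hX)).const_mul (-1))
      (|b0| + |θt| / mh0) fun ω => ?_
    rw [abs_mul, abs_neg, abs_one, one_mul]
    exact absMulInd _ (scoreBd_add (hh0 _ _) (hh1 _ _) hmh0pos)
  have iErr0N : Integrable (fun ω => (-(2 * b0))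
      * ((η (X ω) false - ηh (X ω) false) * (if gtil (X ω) false then (1:ℝ) else 0))) μ0 := by
    refine intbdd (((me0.sub mhf0).mul (mT0x.comp hX)).const_mul _)
      (|(-(2 * b0))| * 2) fun ω => ?_
    rw [abs_mul]
    gcongr
    exact absMulInd _ (habsd _ _)
  have ihT0N : Integrable (fun ω => (θt / mh0)
      * (ηh (X ω) false * (if gtil (X ω) false then (1:ℝ) else 0))) μ0 := by
    refine intbdd ((mhf0.mul (mT0x.comp hX)).const_mul _) (|(θt / mh0)| * 1) fun ω => ?_
    rw [abs_mul]
    gcongr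
    exact absMulInd _ (habsh _ _)
  have iMaxU0 : Integrable (fun ω =>
      max (b0 * (2 * η (X ω) false - 1) + θs * η (X ω) false / m0) 0) μ0 :=
    intbdd ((mU0.comp hX).max measurable_const) (|b0| + |θs| / m0) fun ω =>
      (absMaxLe _).trans (scoreBd_add (hη0 _ _) (hη1 _ _) hm0pos)
  have iMaxW0 : Integrable (fun ω =>
      max (b0 * (2 * η (X ω) false - 1) + θt * η (X ω) false / m0) 0) μ0 :=
    intbdd ((mW0.comp hX).max measurable_const) (|b0| + |θt| / m0) fun ω =>
      (absMaxLe _).trans (scoreBd_add (hη0 _ _) (hη1 _ _) hm0pos)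
  have iMaxV0 : Integrable (fun ω =>
      max (b0 * (2 * ηh (X ω) false - 1) + θt * ηh (X ω) false / mh0) 0) μ0 :=
    intbdd ((mV0.comp hX).max measurable_const) (|b0| + |θt| / mh0) fun ω =>
      (absMaxLe _).trans (scoreBd_add (hh0 _ _) (hh1 _ _) hmh0pos)
  have iR0a : Integrable (fun ω => 2 * b0 * |η (X ω) false - ηh (X ω) false|) μ0 := by
    refine intbdd ((me0.sub mhf0).abs.const_mul _) (|2 * b0| * 2) fun ω => ?_
    rw [abs_mul, abs_abs]
    gcongr
    exact habsd _ _
  have iR0b : Integrable (fun ω => 2 / m0 * |η (X ω) false - ηh (X ω) false|) μ0 := by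
    refine intbdd ((me0.sub mhf0).abs.const_mul _) (|2 / m0| * 2) fun ω => ?_
    rw [abs_mul, abs_abs]
    gcongr
    exact habsd _ _
  have iR0c : Integrable (fun ω => 2 * |1 / m0 - 1 / mh0| * ηh (X ω) false) μ0 := by
    refine intbdd (mhf0.const_mul _) (abs (2 * |1 / m0 - 1 / mh0|) * 1) fun ω => ?_
    rw [abs_mul]
    gcongr
    exact habsh _ _
  -- integrability over P
  have iGsP : Integrable (fun ω => (1 - 2 * η (X ω) (S ω))
      * (if gstar (X ω) (S ω) then (1:ℝ) else 0)) P := by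
    refine intbdd ((measurable_const.sub (meS.const_mul 2)).mul mGS) 3 fun ω => ?_
    refine absMulInd _ ?_
    have h := abs_le.1 (habsη (X ω) (S ω))
    exact abs_le.2 ⟨by linarith [h.1, h.2], by linarith [h.1, h.2]⟩
  have iTsP : Integrable (fun ω => (1 - 2 * η (X ω) (S ω))
      * (if gtil (X ω) (S ω) then (1:ℝ) else 0)) P := by
    refine intbdd ((measurable_const.sub (meS.const_mul 2)).mul mTS) 3 fun ω => ?_
    refine absMulInd _ ?_
    have h := abs_le.1 (habsη (X ω) (S ω))
    exact abs_le.2 ⟨by linarith [h.1, h.2], by linarith [h.1, h.2]⟩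
  have iDP : Integrable (fun ω => |ηh (X ω) (S ω) - η (X ω) (S ω)|) P :=
    intbdd (mhS.sub meS).abs 2 fun ω => by rw [abs_abs]; exact habsd' _ _
  -- split the risks over the two groups
  have hGsplit : ∫ ω, (1 - 2 * η (X ω) (S ω)) * (if gstar (X ω) (S ω) then (1:ℝ) else 0) ∂P
      = b1 * ∫ ω, (1 - 2 * η (X ω) true) * (if gstar (X ω) true then (1:ℝ) else 0) ∂μ1
        + b0 * ∫ ω, (1 - 2 * η (X ω) false) * (if gstar (X ω) false then (1:ℝ) else 0) ∂μ0 :=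
    hsplit _ _ _ iGsP (fun ω h => by simp only [h]) (fun ω h => by simp only [h])
  have hTsplit : ∫ ω, (1 - 2 * η (X ω) (S ω)) * (if gtil (X ω) (S ω) then (1:ℝ) else 0) ∂P
      = b1 * ∫ ω, (1 - 2 * η (X ω) true) * (if gtil (X ω) true then (1:ℝ) else 0) ∂μ1
        + b0 * ∫ ω, (1 - 2 * η (X ω) false) * (if gtil (X ω) false then (1:ℝ) else 0) ∂μ0 :=
    hsplit _ _ _ iTsP (fun ω h => by simp only [h]) (fun ω h => by simp only [h])
  have hDPsplit : ∫ ω, |ηh (X ω) (S ω) - η (X ω) (S ω)| ∂P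
      = b1 * ∫ ω, |η (X ω) true - ηh (X ω) true| ∂μ1
        + b0 * ∫ ω, |η (X ω) false - ηh (X ω) false| ∂μ0 :=
    hsplit _ _ _ iDP (fun ω h => by rw [h, abs_sub_comm]) (fun ω h => by rw [h, abs_sub_comm])
  -- per-group identities for g*
  have grp1G : b1 * ∫ ω, (1 - 2 * η (X ω) true) * (if gstar (X ω) true then (1:ℝ) else 0) ∂μ1
      = (-1) * (∫ ω, max (b1 * (2 * η (X ω) true - 1) - θs * η (X ω) true / m1) 0 ∂μ1)
        + (-(θs / m1)) * ∫ ω, η (X ω) true * (if gstar (X ω) true then (1:ℝ) else 0) ∂μ1 := by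
    rw [← integral_const_mul b1 (fun ω => (1 - 2 * η (X ω) true)
      * (if gstar (X ω) true then (1:ℝ) else 0))]
    rw [show (fun ω => b1 * ((1 - 2 * η (X ω) true) * (if gstar (X ω) true then (1:ℝ) else 0)))
        = fun ω => (-1) * ((b1 * (2 * η (X ω) true - 1) - θs * η (X ω) true / m1)
            * (if gstar (X ω) true then (1:ℝ) else 0))
          + (-(θs / m1)) * (η (X ω) true * (if gstar (X ω) true then (1:ℝ) else 0))
      from funext fun ω => by ring]
    rw [integral_add iU1G1 ie1G1, integral_const_mul, integral_const_mul,
      pick_pos μ1 _ _ hselG1]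
  have grp0G : b0 * ∫ ω, (1 - 2 * η (X ω) false) * (if gstar (X ω) false then (1:ℝ) else 0) ∂μ0
      = (-1) * (∫ ω, max (b0 * (2 * η (X ω) false - 1) + θs * η (X ω) false / m0) 0 ∂μ0)
        + (θs / m0) * ∫ ω, η (X ω) false * (if gstar (X ω) false then (1:ℝ) else 0) ∂μ0 := by
    rw [← integral_const_mul b0 (fun ω => (1 - 2 * η (X ω) false)
      * (if gstar (X ω) false then (1:ℝ) else 0))]
    rw [show (fun ω => b0 * ((1 - 2 * η (X ω) false) * (if gstar (X ω) false then (1:ℝ) else 0)))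
        = fun ω => (-1) * ((b0 * (2 * η (X ω) false - 1) + θs * η (X ω) false / m0)
            * (if gstar (X ω) false then (1:ℝ) else 0))
          + (θs / m0) * (η (X ω) false * (if gstar (X ω) false then (1:ℝ) else 0))
      from funext fun ω => by ring]
    rw [integral_add iU0G0 ie0G0, integral_const_mul, integral_const_mul,
      pick_pos μ0 _ _ hselG0]
  -- per-group identities for g~
  have grp1T : b1 * ∫ ω, (1 - 2 * η (X ω) true) * (if gtil (X ω) true then (1:ℝ) else 0) ∂μ1
      = (-1) * (∫ ω, max (b1 * (2 * ηh (X ω) true - 1) - θt * ηh (X ω) true / mh1) 0 ∂μ1)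
        + (-(2 * b1)) * (∫ ω, (η (X ω) true - ηh (X ω) true)
            * (if gtil (X ω) true then (1:ℝ) else 0) ∂μ1)
        + (-(θt / mh1)) * ∫ ω, ηh (X ω) true * (if gtil (X ω) true then (1:ℝ) else 0) ∂μ1 := by
    rw [← integral_const_mul b1 (fun ω => (1 - 2 * η (X ω) true)
      * (if gtil (X ω) true then (1:ℝ) else 0))]
    rw [show (fun ω => b1 * ((1 - 2 * η (X ω) true) * (if gtil (X ω) true then (1:ℝ) else 0)))
        = fun ω => (-1) * ((b1 * (2 * ηh (X ω) true - 1) - θt * ηh (X ω) true / mh1)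
            * (if gtil (X ω) true then (1:ℝ) else 0))
          + (-(2 * b1)) * ((η (X ω) true - ηh (X ω) true)
            * (if gtil (X ω) true then (1:ℝ) else 0))
          + (-(θt / mh1)) * (ηh (X ω) true * (if gtil (X ω) true then (1:ℝ) else 0))
      from funext fun ω => by ring]
    have iSum1 : Integrable (fun ω => (-1 : ℝ)
        * ((b1 * (2 * ηh (X ω) true - 1) - θt * ηh (X ω) true / mh1)
          * (if gtil (X ω) true then (1:ℝ) else 0))
        + (-(2 * b1)) * ((η (X ω) true - ηh (X ω) true)
          * (if gtil (X ω) true then (1:ℝ) else 0))) μ1 := iV1T1.add iErr1N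
    rw [integral_add iSum1 ihT1N, integral_add iV1T1 iErr1N,
      integral_const_mul, integral_const_mul, integral_const_mul,
      pick_pos μ1 _ _ hselT1]
  have grp0T : b0 * ∫ ω, (1 - 2 * η (X ω) false) * (if gtil (X ω) false then (1:ℝ) else 0) ∂μ0
      = (-1) * (∫ ω, max (b0 * (2 * ηh (X ω) false - 1) + θt * ηh (X ω) false / mh0) 0 ∂μ0)
        + (-(2 * b0)) * (∫ ω, (η (X ω) false - ηh (X ω) false)
            * (if gtil (X ω) false then (1:ℝ) else 0) ∂μ0)
        + (θt / mh0) * ∫ ω, ηh (X ω) false * (if gtil (X ω) false then (1:ℝ) else 0) ∂μ0 := by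
    rw [← integral_const_mul b0 (fun ω => (1 - 2 * η (X ω) false)
      * (if gtil (X ω) false then (1:ℝ) else 0))]
    rw [show (fun ω => b0 * ((1 - 2 * η (X ω) false) * (if gtil (X ω) false then (1:ℝ) else 0)))
        = fun ω => (-1) * ((b0 * (2 * ηh (X ω) false - 1) + θt * ηh (X ω) false / mh0)
            * (if gtil (X ω) false then (1:ℝ) else 0))
          + (-(2 * b0)) * ((η (X ω) false - ηh (X ω) false)
            * (if gtil (X ω) false then (1:ℝ) else 0))
          + (θt / mh0) * (ηh (X ω) false * (if gtil (X ω) false then (1:ℝ) else 0))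
      from funext fun ω => by ring]
    have iSum0 : Integrable (fun ω => (-1 : ℝ)
        * ((b0 * (2 * ηh (X ω) false - 1) + θt * ηh (X ω) false / mh0)
          * (if gtil (X ω) false then (1:ℝ) else 0))
        + (-(2 * b0)) * ((η (X ω) false - ηh (X ω) false)
          * (if gtil (X ω) false then (1:ℝ) else 0))) μ0 := iV0T0.add iErr0N
    rw [integral_add iSum0 ihT0N, integral_add iV0T0 iErr0N,
      integral_const_mul, integral_const_mul, integral_const_mul,
      pick_pos μ0 _ _ hselT0]
  -- balance cancellations
  have hbalG : (-(θs / m1)) * (∫ ω, η (X ω) true * (if gstar (X ω) true then (1:ℝ) else 0) ∂μ1)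
      + (θs / m0) * (∫ ω, η (X ω) false * (if gstar (X ω) false then (1:ℝ) else 0) ∂μ0) = 0 := by
    linear_combination (-θs) * hbalstar
  have hbalT : (-(θt / mh1)) * (∫ ω, ηh (X ω) true * (if gtil (X ω) true then (1:ℝ) else 0) ∂μ1)
      + (θt / mh0) * (∫ ω, ηh (X ω) false * (if gtil (X ω) false then (1:ℝ) else 0) ∂μ0) = 0 := by
    linear_combination (-θt) * hbaltil
  -- error bounds for the g~ identities
  have hE1 : -(∫ ω, |η (X ω) true - ηh (X ω) true| ∂μ1)
      ≤ ∫ ω, (η (X ω) true - ηh (X ω) true) * (if gtil (X ω) true then (1:ℝ) else 0) ∂μ1 := by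
    have h := integral_mono iNegAbs1 iE1' (fun ω => by
      dsimp only
      by_cases hh' : gtil (X ω) true = true
      · rw [if_pos hh', mul_one]; exact neg_abs_le _
      · rw [if_neg hh', mul_zero]; exact neg_nonpos.2 (abs_nonneg _))
    rwa [integral_neg] at h
  have hE0 : -(∫ ω, |η (X ω) false - ηh (X ω) false| ∂μ0)
      ≤ ∫ ω, (η (X ω) false - ηh (X ω) false) * (if gtil (X ω) false then (1:ℝ) else 0) ∂μ0 := by
    have h := integral_mono iNegAbs0 iE0' (fun ω => by
      dsimp only
      by_cases hh' : gtil (X ω) false = true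
      · rw [if_pos hh', mul_one]; exact neg_abs_le _
      · rw [if_neg hh', mul_zero]; exact neg_nonpos.2 (abs_nonneg _))
    rwa [integral_neg] at h
  have hE1' : (-(2 * b1)) * (∫ ω, (η (X ω) true - ηh (X ω) true)
      * (if gtil (X ω) true then (1:ℝ) else 0) ∂μ1)
      ≤ 2 * b1 * (∫ ω, |η (X ω) true - ηh (X ω) true| ∂μ1) := by
    have h0 : (0:ℝ) ≤ b1 * ((∫ ω, (η (X ω) true - ηh (X ω) true)
        * (if gtil (X ω) true then (1:ℝ) else 0) ∂μ1)
        + ∫ ω, |η (X ω) true - ηh (X ω) true| ∂μ1) :=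
      mul_nonneg hb1nn (by linarith [hE1])
    linarith [h0]
  have hE0' : (-(2 * b0)) * (∫ ω, (η (X ω) false - ηh (X ω) false)
      * (if gtil (X ω) false then (1:ℝ) else 0) ∂μ0)
      ≤ 2 * b0 * (∫ ω, |η (X ω) false - ηh (X ω) false| ∂μ0) := by
    have h0 : (0:ℝ) ≤ b0 * ((∫ ω, (η (X ω) false - ηh (X ω) false)
        * (if gtil (X ω) false then (1:ℝ) else 0) ∂μ0)
        + ∫ ω, |η (X ω) false - ηh (X ω) false| ∂μ0) :=
      mul_nonneg hb0nn (by linarith [hE0])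
    linarith [h0]
  -- comparison of the phi-functionals at θt
  have hdm1 : |mh1 - m1| ≤ ∫ ω, |η (X ω) true - ηh (X ω) true| ∂μ1 := by
    have hsub : mh1 - m1 = ∫ ω, (ηh (X ω) true - η (X ω) true) ∂μ1 := by
      rw [hmh1, hm1]; exact (integral_sub ih1int ie1int).symm
    rw [hsub]
    have h := norm_integral_le_integral_norm (μ := μ1) (fun ω => ηh (X ω) true - η (X ω) true)
    simp only [Real.norm_eq_abs] at h
    exact h.trans (le_of_eq (integral_congr_ae (ae_of_all _ fun ω => abs_sub_comm _ _)))
  have hdm0 : |mh0 - m0| ≤ ∫ ω, |η (X ω) false - ηh (X ω) false| ∂μ0 := by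
    have hsub : mh0 - m0 = ∫ ω, (ηh (X ω) false - η (X ω) false) ∂μ0 := by
      rw [hmh0, hm0]; exact (integral_sub ih0int ie0int).symm
    rw [hsub]
    have h := norm_integral_le_integral_norm (μ := μ0) (fun ω => ηh (X ω) false - η (X ω) false)
    simp only [Real.norm_eq_abs] at h
    exact h.trans (le_of_eq (integral_congr_ae (ae_of_all _ fun ω => abs_sub_comm _ _)))
  have hm1ne : m1 ≠ 0 := ne_of_gt hm1pos
  have hmh1ne : mh1 ≠ 0 := ne_of_gt hmh1pos
  have hm0ne : m0 ≠ 0 := ne_of_gt hm0pos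
  have hmh0ne : mh0 ≠ 0 := ne_of_gt hmh0pos
  have hK1 : mh1 * |1 / m1 - 1 / mh1| ≤ (∫ ω, |η (X ω) true - ηh (X ω) true| ∂μ1) / m1 := by
    have hq : |1 / m1 - 1 / mh1| = |mh1 - m1| / (m1 * mh1) := by
      rw [div_sub_div _ _ hm1ne hmh1ne, one_mul, mul_one, abs_div,
        abs_of_pos (mul_pos hm1pos hmh1pos)]
    rw [hq, show mh1 * (|mh1 - m1| / (m1 * mh1)) = |mh1 - m1| / m1 by field_simp]
    exact div_le_div_of_nonneg_right hdm1 hm1pos.le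
  have hK0 : mh0 * |1 / m0 - 1 / mh0| ≤ (∫ ω, |η (X ω) false - ηh (X ω) false| ∂μ0) / m0 := by
    have hq : |1 / m0 - 1 / mh0| = |mh0 - m0| / (m0 * mh0) := by
      rw [div_sub_div _ _ hm0ne hmh0ne, one_mul, mul_one, abs_div,
        abs_of_pos (mul_pos hm0pos hmh0pos)]
    rw [hq, show mh0 * (|mh0 - m0| / (m0 * mh0)) = |mh0 - m0| / m0 by field_simp]
    exact div_le_div_of_nonneg_right hdm0 hm0pos.le
  have grpWV1 : (∫ ω, max (b1 * (2 * η (X ω) true - 1) - θt * η (X ω) true / m1) 0 ∂μ1)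
      ≤ (∫ ω, max (b1 * (2 * ηh (X ω) true - 1) - θt * ηh (X ω) true / mh1) 0 ∂μ1)
        + (2 * b1 * (∫ ω, |η (X ω) true - ηh (X ω) true| ∂μ1)
          + 2 / m1 * (∫ ω, |η (X ω) true - ηh (X ω) true| ∂μ1)
          + 2 * |1 / m1 - 1 / mh1| * mh1) := by
    have hpt : ∀ ω, max (b1 * (2 * η (X ω) true - 1) - θt * η (X ω) true / m1) 0
        ≤ max (b1 * (2 * ηh (X ω) true - 1) - θt * ηh (X ω) true / mh1) 0
          + (2 * b1 * |η (X ω) true - ηh (X ω) true|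
            + 2 / m1 * |η (X ω) true - ηh (X ω) true|
            + 2 * |1 / m1 - 1 / mh1| * ηh (X ω) true) := fun ω =>
      maxmax (keybd_sub hm1pos hmh1pos hb1nn hθt (hh0 _ _) rfl)
    have iRab : Integrable (fun ω => 2 * b1 * |η (X ω) true - ηh (X ω) true|
        + 2 / m1 * |η (X ω) true - ηh (X ω) true|) μ1 := iR1a.add iR1b
    have iRabc : Integrable (fun ω => 2 * b1 * |η (X ω) true - ηh (X ω) true|
        + 2 / m1 * |η (X ω) true - ηh (X ω) true|
        + 2 * |1 / m1 - 1 / mh1| * ηh (X ω) true) μ1 := iRab.add iR1c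
    have iSumV : Integrable (fun ω =>
        max (b1 * (2 * ηh (X ω) true - 1) - θt * ηh (X ω) true / mh1) 0
        + (2 * b1 * |η (X ω) true - ηh (X ω) true|
          + 2 / m1 * |η (X ω) true - ηh (X ω) true|
          + 2 * |1 / m1 - 1 / mh1| * ηh (X ω) true)) μ1 := iMaxV1.add iRabc
    have h2 := integral_mono iMaxW1 iSumV (fun ω => hpt ω)
    rw [integral_add iMaxV1 iRabc, integral_add iRab iR1c, integral_add iR1a iR1b,
      integral_const_mul, integral_const_mul, integral_const_mul, ← hmh1] at h2
    linarith [h2]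
  have grpWV0 : (∫ ω, max (b0 * (2 * η (X ω) false - 1) + θt * η (X ω) false / m0) 0 ∂μ0)
      ≤ (∫ ω, max (b0 * (2 * ηh (X ω) false - 1) + θt * ηh (X ω) false / mh0) 0 ∂μ0)
        + (2 * b0 * (∫ ω, |η (X ω) false - ηh (X ω) false| ∂μ0)
          + 2 / m0 * (∫ ω, |η (X ω) false - ηh (X ω) false| ∂μ0)
          + 2 * |1 / m0 - 1 / mh0| * mh0) := by
    have hpt : ∀ ω, max (b0 * (2 * η (X ω) false - 1) + θt * η (X ω) false / m0) 0
        ≤ max (b0 * (2 * ηh (X ω) false - 1) + θt * ηh (X ω) false / mh0) 0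
          + (2 * b0 * |η (X ω) false - ηh (X ω) false|
            + 2 / m0 * |η (X ω) false - ηh (X ω) false|
            + 2 * |1 / m0 - 1 / mh0| * ηh (X ω) false) := fun ω =>
      maxmax (keybd_add hm0pos hmh0pos hb0nn hθt (hh0 _ _) rfl)
    have iRab : Integrable (fun ω => 2 * b0 * |η (X ω) false - ηh (X ω) false|
        + 2 / m0 * |η (X ω) false - ηh (X ω) false|) μ0 := iR0a.add iR0b
    have iRabc : Integrable (fun ω => 2 * b0 * |η (X ω) false - ηh (X ω) false|
        + 2 / m0 * |η (X ω) false - ηh (X ω) false|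
        + 2 * |1 / m0 - 1 / mh0| * ηh (X ω) false) μ0 := iRab.add iR0c
    have iSumV : Integrable (fun ω =>
        max (b0 * (2 * ηh (X ω) false - 1) + θt * ηh (X ω) false / mh0) 0
        + (2 * b0 * |η (X ω) false - ηh (X ω) false|
          + 2 / m0 * |η (X ω) false - ηh (X ω) false|
          + 2 * |1 / m0 - 1 / mh0| * ηh (X ω) false)) μ0 := iMaxV0.add iRabc
    have h2 := integral_mono iMaxW0 iSumV (fun ω => hpt ω)
    rw [integral_add iMaxV0 iRabc, integral_add iRab iR0c, integral_add iR0a iR0b,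
      integral_const_mul, integral_const_mul, integral_const_mul, ← hmh0] at h2
    linarith [h2]
  -- final assembly
  have hmin := hminstar θt
  rw [hR2, hR1]
  simp only [div_eq_mul_inv] at hGsplit hTsplit hDPsplit grp1G grp0G grp1T grp0T hbalG hbalT hE1' hE0' hmin grpWV1 grpWV0 hK1 hK0 ⊢
  linarith [hGsplit, hTsplit, hDPsplit, grp1G, grp0G, grp1T, grp0T, hbalG, hbalT,
    hE1', hE0', hmin, grpWV1, grpWV0, hK1, hK0]
end

section
/- Assume Assumption 1 and let g* be an optimal Equal Opportunity classifier. For each n, let (T_n, Q_n) be a probability space and let η̂_n : T_n × ℝ^d × {0,1} → [0,1] be jointly measurable such that: (i) for each s ∈ {0,1}, ∫ E_{X|S=s}|η(X,s) − η̂_n(τ,X,s)| dQ_n(τ) → 0 as n → ∞; (ii) for Q_n-almost every τ and each s, m̂_s(τ) := E_{X|S=s}[η̂_n(τ,X,s)] > 0; and (iii) there exist measurable maps θ̃_n : T_n → [−2,2] such that for Q_n-almost every τ the classifier g̃_n^τ defined by g̃_n^τ(x,1) := 1{ℙ(S=1)(2η̂_n(τ,x,1)−1) − θ̃_n(τ)·η̂_n(τ,x,1)/m̂_1(τ)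 ≥ 0} and g̃_n^τ(x,0) := 1{ℙ(S=0)(2η̂_n(τ,x,0)−1) + θ̃_n(τ)·η̂_n(τ,x,0)/m̂_0(τ) ≥ 0} satisfies E_{X|S=1}[η̂_n(τ,X,1)·g̃_n^τ(X,1)]/m̂_1(τ) = E_{X|S=0}[η̂_n(τ,X,0)·g̃_n^τ(X,0)]/m̂_0(τ). Then limsup_{n→∞} ∫ R(g̃_n^τ) dQ_n(τ) ≤ R(g*). -/
open MeasureTheory ProbabilityTheory Set Filter

namespace Stmt18

noncomputable def bI (b : Bool) : ℝ := if b then 1 else 0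

lemma bI_nonneg (b : Bool) : 0 ≤ bI b := by cases b <;> simp [bI]
lemma bI_le_one (b : Bool) : bI b ≤ 1 := by cases b <;> simp [bI]
lemma bI_abs_le (b : Bool) : |bI b| ≤ 1 := by cases b <;> simp [bI]

lemma integrable_of_bdd {α : Type*} [MeasurableSpace α] {μ : Measure α} [IsFiniteMeasure μ]
    {f : α → ℝ} (hf : AEStronglyMeasurable f μ) {C : ℝ} (h : ∀ x, |f x| ≤ C) :
    Integrable f μ :=
  ⟨hf, HasFiniteIntegral.of_bounded (C := C)
    (Filter.Eventually.of_forall (fun x => by simpa [Real.norm_eq_abs] using h x))⟩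

lemma measurable_bI {α : Type*} [MeasurableSpace α] {g : α → Bool} (hg : Measurable g) :
    Measurable (fun x => bI (g x)) :=
  (measurable_from_top (f := bI)).comp hg

variable {Ω : Type*} [MeasurableSpace Ω] {μ : Measure Ω} [IsProbabilityMeasure μ]

omit [IsProbabilityMeasure μ] in
lemma abs_int_le {f : Ω → ℝ} : |∫ ω, f ω ∂μ| ≤ ∫ ω, |f ω| ∂μ := by
  simpa [Real.norm_eq_abs] using norm_integral_le_integral_norm (μ := μ) f

lemma int_mul_bI_abs_le {f : Ω → ℝ} {g : Ω → Bool}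
    (hf : Measurable f) (hg : Measurable g) {C : ℝ} (hC : ∀ ω, |f ω| ≤ C) :
    |∫ ω, f ω * bI (g ω) ∂μ| ≤ ∫ ω, |f ω| ∂μ := by
  have hint : Integrable (fun ω => f ω * bI (g ω)) μ :=
    integrable_of_bdd (hf.mul (measurable_bI hg)).aestronglyMeasurable (C := C)
      (fun ω => by
        rw [abs_mul]
        calc |f ω| * |bI (g ω)| ≤ |f ω| * 1 :=
              mul_le_mul_of_nonneg_left (bI_abs_le _) (abs_nonneg _)
          _ = |f ω| := mul_one _
          _ ≤ C := hC ω)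
  refine (abs_int_le).trans ?_
  refine integral_mono (hint.abs) (integrable_of_bdd hf.abs.aestronglyMeasurable (C := C)
    (fun ω => by simpa using hC ω)) (fun ω => ?_)
  rw [abs_mul]
  calc |f ω| * |bI (g ω)| ≤ |f ω| * 1 :=
        mul_le_mul_of_nonneg_left (bI_abs_le _) (abs_nonneg _)
    _ = |f ω| := mul_one _

lemma ratio_bd {e eh : Ω → ℝ} {g : Ω → Bool}
    (hme : Measurable e) (hmeh : Measurable eh) (hg : Measurable g)
    (he : ∀ ω, e ω ∈ Icc (0:ℝ) 1) (heh : ∀ ω, eh ω ∈ Icc (0:ℝ) 1)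
    (hm : 0 < ∫ ω, e ω ∂μ) (hmh : 0 < ∫ ω, eh ω ∂μ) :
    |(∫ ω, eh ω * bI (g ω) ∂μ) / (∫ ω, eh ω ∂μ)
      - (∫ ω, e ω * bI (g ω) ∂μ) / (∫ ω, e ω ∂μ)|
      ≤ 2 * (∫ ω, |e ω - eh ω| ∂μ) / (∫ ω, e ω ∂μ) := by
  have hie : Integrable e μ :=
    integrable_of_bdd hme.aestronglyMeasurable (C := 1)
      (fun ω => abs_le.2 ⟨by linarith [(he ω).1], (he ω).2⟩)
  have hieh : Integrable eh μ :=
    integrable_of_bdd hmeh.aestronglyMeasurable (C := 1)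
      (fun ω => abs_le.2 ⟨by linarith [(heh ω).1], (heh ω).2⟩)
  have hiΔ : Integrable (fun ω => |e ω - eh ω|) μ :=
    integrable_of_bdd (hme.sub hmeh).abs.aestronglyMeasurable (C := 2)
      (fun ω => by
        rw [abs_abs]
        have := (he ω).1; have := (he ω).2; have := (heh ω).1; have := (heh ω).2
        rw [abs_le]; constructor <;> linarith)
  set m := ∫ ω, e ω ∂μ with hm_def
  set mh := ∫ ω, eh ω ∂μ with hmh_def
  set u := ∫ ω, eh ω * bI (g ω) ∂μ with hu_def
  set v := ∫ ω, e ω * bI (g ω) ∂μ with hv_def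
  set Δ := ∫ ω, |e ω - eh ω| ∂μ with hΔ_def
  have hiu : Integrable (fun ω => eh ω * bI (g ω)) μ :=
    integrable_of_bdd (hmeh.mul (measurable_bI hg)).aestronglyMeasurable (C := 1)
      (fun ω => by
        rw [abs_mul]
        calc |eh ω| * |bI (g ω)| ≤ 1 * 1 := by
              apply mul_le_mul _ (bI_abs_le _) (abs_nonneg _) zero_le_one
              exact abs_le.2 ⟨by linarith [(heh ω).1], (heh ω).2⟩
          _ = 1 := one_mul _)
  have hiv : Integrable (fun ω => e ω * bI (g ω)) μ :=
    integrable_of_bdd (hme.mul (measurable_bI hg)).aestronglyMeasurable (C := 1)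
      (fun ω => by
        rw [abs_mul]
        calc |e ω| * |bI (g ω)| ≤ 1 * 1 := by
              apply mul_le_mul _ (bI_abs_le _) (abs_nonneg _) zero_le_one
              exact abs_le.2 ⟨by linarith [(he ω).1], (he ω).2⟩
          _ = 1 := one_mul _)
  have h1 : |m - mh| ≤ Δ := by
    rw [hm_def, hmh_def, ← integral_sub hie hieh]
    exact (abs_int_le).trans (le_of_eq rfl)
  have h2 : |u - v| ≤ Δ := by
    rw [hu_def, hv_def, ← integral_sub hiu hiv]
    refine (abs_int_le).trans ?_
    refine integral_mono ?_ hiΔ (fun ω => ?_)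
    · exact (hiu.sub hiv).abs
    · have : eh ω * bI (g ω) - e ω * bI (g ω) = (eh ω - e ω) * bI (g ω) := by ring
      rw [this, abs_mul, abs_sub_comm]
      calc |e ω - eh ω| * |bI (g ω)| ≤ |e ω - eh ω| * 1 :=
            mul_le_mul_of_nonneg_left (bI_abs_le _) (abs_nonneg _)
        _ = |e ω - eh ω| := mul_one _
  have h3 : 0 ≤ u := integral_nonneg (fun ω => mul_nonneg (heh ω).1 (bI_nonneg _))
  have h4 : u ≤ mh := integral_mono hiu hieh
    (fun ω => by
      calc eh ω * bI (g ω) ≤ eh ω * 1 :=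
            mul_le_mul_of_nonneg_left (bI_le_one _) (heh ω).1
        _ = eh ω := mul_one _)
  have hΔ0 : 0 ≤ Δ := integral_nonneg (fun ω => abs_nonneg _)
  have key : u / mh - v / m = (u / mh) * ((m - mh) / m) + (u - v) / m := by
    field_simp
    ring
  rw [key]
  have hum : |u / mh| ≤ 1 := by
    rw [abs_div, abs_of_nonneg h3, abs_of_nonneg hmh.le]
    exact div_le_one_of_le₀ h4 hmh.le
  calc |u / mh * ((m - mh) / m) + (u - v) / m|
      ≤ |u / mh * ((m - mh) / m)| + |(u - v) / m| := abs_add_le _ _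
    _ = |u / mh| * (|m - mh| / m) + |u - v| / m := by
        rw [abs_mul, abs_div (m - mh) m, abs_div (u - v) m, abs_of_nonneg hm.le]
    _ ≤ 1 * (Δ / m) + Δ / m := by
        have d1 : |m - mh| / m ≤ Δ / m := (div_le_div_iff_of_pos_right hm).mpr h1
        have d2 : |u - v| / m ≤ Δ / m := (div_le_div_iff_of_pos_right hm).mpr h2
        have d3 := mul_le_mul hum d1 (div_nonneg (abs_nonneg _) hm.le) zero_le_one
        linarith
    _ = 2 * Δ / m := by ring

/-- integrability of (2e-1)*bI c type functions -/
lemma int01 {e : Ω → ℝ} {c : Ω → Bool} (hme : Measurable e)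
    (he : ∀ ω, e ω ∈ Icc (0:ℝ) 1) (hc : Measurable c) :
    Integrable (fun ω => (2 * e ω - 1) * bI (c ω)) μ := by
  refine integrable_of_bdd ((((measurable_const.mul hme).sub measurable_const).mul
    (measurable_bI hc))).aestronglyMeasurable (C := 1) (fun ω => ?_)
  rw [abs_mul]
  have h1 : |2 * e ω - 1| ≤ 1 := by
    have := (he ω).1; have := (he ω).2
    rw [abs_le]; constructor <;> linarith
  calc |2 * e ω - 1| * |bI (c ω)| ≤ 1 * 1 :=
        mul_le_mul h1 (bI_abs_le _) (abs_nonneg _) zero_le_one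
    _ = 1 := one_mul _

lemma int02 {e : Ω → ℝ} {c : Ω → Bool} (hme : Measurable e)
    (he : ∀ ω, e ω ∈ Icc (0:ℝ) 1) (hc : Measurable c) :
    Integrable (fun ω => e ω * bI (c ω)) μ := by
  refine integrable_of_bdd (hme.mul (measurable_bI hc)).aestronglyMeasurable (C := 1)
    (fun ω => ?_)
  rw [abs_mul]
  calc |e ω| * |bI (c ω)| ≤ 1 * 1 :=
        mul_le_mul (abs_le.2 ⟨by linarith [(he ω).1], (he ω).2⟩) (bI_abs_le _)
          (abs_nonneg _) zero_le_one
    _ = 1 := one_mul _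

lemma int03 {e : Ω → ℝ} (hme : Measurable e) (he : ∀ ω, e ω ∈ Icc (0:ℝ) 1) :
    Integrable e μ :=
  integrable_of_bdd hme.aestronglyMeasurable (C := 1)
    (fun ω => abs_le.2 ⟨by linarith [(he ω).1], (he ω).2⟩)

lemma int04 {e eh : Ω → ℝ} (hme : Measurable e) (hmeh : Measurable eh)
    (he : ∀ ω, e ω ∈ Icc (0:ℝ) 1) (heh : ∀ ω, eh ω ∈ Icc (0:ℝ) 1) :
    Integrable (fun ω => |e ω - eh ω|) μ :=
  integrable_of_bdd (hme.sub hmeh).abs.aestronglyMeasurable (C := 2)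
    (fun ω => by
      rw [abs_abs]
      have := (he ω).1; have := (he ω).2; have := (heh ω).1; have := (heh ω).2
      rw [abs_le]; constructor <;> linarith)

/-- difference bound: |∫(2eh-1)1c - ∫(2e-1)1c| ≤ 2∫|e-eh| -/
lemma diff_bd {e eh : Ω → ℝ} {c : Ω → Bool}
    (hme : Measurable e) (hmeh : Measurable eh) (hc : Measurable c)
    (he : ∀ ω, e ω ∈ Icc (0:ℝ) 1) (heh : ∀ ω, eh ω ∈ Icc (0:ℝ) 1) :
    |(∫ ω, (2 * eh ω - 1) * bI (c ω) ∂μ) - ∫ ω, (2 * e ω - 1) * bI (c ω) ∂μ|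
      ≤ 2 * ∫ ω, |e ω - eh ω| ∂μ := by
  rw [← integral_sub (int01 hmeh heh hc) (int01 hme he hc)]
  have hrw : ∀ ω, (2 * eh ω - 1) * bI (c ω) - (2 * e ω - 1) * bI (c ω)
      = (2 * (eh ω - e ω)) * bI (c ω) := fun ω => by ring
  simp_rw [hrw]
  refine (int_mul_bI_abs_le (f := fun ω => 2 * (eh ω - e ω)) ((measurable_const.mul (hmeh.sub hme))) hc (C := 2)
    (fun ω => ?_)).trans ?_
  · rw [abs_mul, abs_two]
    have h1 : |eh ω - e ω| ≤ 1 := by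
      have := (he ω).1; have := (he ω).2; have := (heh ω).1; have := (heh ω).2
      rw [abs_le]; constructor <;> linarith
    linarith
  · have : ∀ ω, |2 * (eh ω - e ω)| = 2 * |e ω - eh ω| := fun ω => by
      rw [abs_mul, abs_two, abs_sub_comm]
    simp_rw [this]
    rw [integral_const_mul]


/-- pure arithmetic combination -/
lemma arith {pT pF θ mT mF mhT mhF ΔT ΔF VTg VFg VTG VFG VhTg VhFg VhTG VhFG
    UTg UFg UhTg UhFg UhTG UhFG : ℝ}
    (hpT0 : 0 ≤ pT) (hpT1 : pT ≤ 1) (hpF0 : 0 ≤ pF) (hpF1 : pF ≤ 1)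
    (hΔT0 : 0 ≤ ΔT) (hΔF0 : 0 ≤ ΔF)
    (e1 : |VhTg - VTg| ≤ 2 * ΔT) (e2 : |VhFg - VFg| ≤ 2 * ΔF)
    (e3 : |VhTG - VTG| ≤ 2 * ΔT) (e4 : |VhFG - VFG| ≤ 2 * ΔF)
    (c5 : |θ * (UhTg / mhT - UTg / mT)| ≤ 4 * ΔT / mT)
    (c6 : |θ * (UhFg / mhF - UFg / mF)| ≤ 4 * ΔF / mF)
    (monoT : pT * VhTg - (θ / mhT) * UhTg ≤ pT * VhTG - (θ / mhT) * UhTG)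
    (monoF : pF * VhFg + (θ / mhF) * UhFg ≤ pF * VhFG + (θ / mhF) * UhFG)
    (hfair : UTg / mT = UFg / mF)
    (hbal : UhTG / mhT = UhFG / mhF) :
    pT * VTg + pF * VFg
      ≤ pT * VTG + pF * VFG + (4 + 4 / mT) * ΔT + (4 + 4 / mF) * ΔF := by
  have c1 : pT * VTg ≤ pT * VhTg + 2 * ΔT := by
    have h' : VTg - VhTg ≤ 2 * ΔT := by
      have := (abs_le.mp e1).1; linarith
    have hmul := mul_le_mul_of_nonneg_left h' hpT0
    have hone : pT * (2 * ΔT) ≤ 2 * ΔT :=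
      mul_le_of_le_one_left (by positivity) hpT1
    nlinarith [hmul, hone]
  have c2 : pF * VFg ≤ pF * VhFg + 2 * ΔF := by
    have h' : VFg - VhFg ≤ 2 * ΔF := by
      have := (abs_le.mp e2).1; linarith
    have hmul := mul_le_mul_of_nonneg_left h' hpF0
    have hone : pF * (2 * ΔF) ≤ 2 * ΔF :=
      mul_le_of_le_one_left (by positivity) hpF1
    nlinarith [hmul, hone]
  have c3 : pT * VhTG ≤ pT * VTG + 2 * ΔT := by
    have h' : VhTG - VTG ≤ 2 * ΔT := (abs_le.mp e3).2.trans_eq' (by ring) |>.trans_eq rfl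
    have hmul := mul_le_mul_of_nonneg_left h' hpT0
    have hone : pT * (2 * ΔT) ≤ 2 * ΔT :=
      mul_le_of_le_one_left (by positivity) hpT1
    nlinarith [hmul, hone]
  have c4 : pF * VhFG ≤ pF * VFG + 2 * ΔF := by
    have h' : VhFG - VFG ≤ 2 * ΔF := (abs_le.mp e4).2
    have hmul := mul_le_mul_of_nonneg_left h' hpF0
    have hone : pF * (2 * ΔF) ≤ 2 * ΔF :=
      mul_le_of_le_one_left (by positivity) hpF1
    nlinarith [hmul, hone]
  have fairθ : θ * (UTg / mT) = θ * (UFg / mF) := by rw [hfair]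
  have balθ : θ * (UhTG / mhT) = θ * (UhFG / mhF) := by rw [hbal]
  have hc5 := abs_le.mp c5
  have hc6 := abs_le.mp c6
  have hd1 : θ * (UhTg / mhT - UTg / mT) = (θ / mhT) * UhTg - θ * (UTg / mT) := by ring
  have hd2 : θ * (UhFg / mhF - UFg / mF) = (θ / mhF) * UhFg - θ * (UFg / mF) := by ring
  have hd3 : θ * (UhTG / mhT) = (θ / mhT) * UhTG := by ring
  have hd4 : θ * (UhFG / mhF) = (θ / mhF) * UhFG := by ring
  rw [hd1] at hc5
  rw [hd2] at hc6
  rw [hd3, hd4] at balθ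
  have goal1 : (4 + 4 / mT) * ΔT = 4 * ΔT + 4 * ΔT / mT := by ring
  have goal2 : (4 + 4 / mF) * ΔF = 4 * ΔF + 4 * ΔF / mF := by ring
  rw [goal1, goal2]
  linarith [c1, c2, c3, c4, hc5.1, hc5.2, hc6.1, hc6.2, monoT, monoF, fairθ, balθ]

set_option maxHeartbeats 1000000 in
/-- The core comparison inequality. -/
lemma core (μT μF : Measure Ω) [IsProbabilityMeasure μT] [IsProbabilityMeasure μF]
    {pT pF θ : ℝ} (hpT0 : 0 ≤ pT) (hpT1 : pT ≤ 1) (hpF0 : 0 ≤ pF) (hpF1 : pF ≤ 1)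
    (hθ : |θ| ≤ 2)
    {eT eF ehT ehF : Ω → ℝ}
    (hmeT : Measurable eT) (hmeF : Measurable eF)
    (hmehT : Measurable ehT) (hmehF : Measurable ehF)
    (heT : ∀ ω, eT ω ∈ Icc (0:ℝ) 1) (heF : ∀ ω, eF ω ∈ Icc (0:ℝ) 1)
    (hehT : ∀ ω, ehT ω ∈ Icc (0:ℝ) 1) (hehF : ∀ ω, ehF ω ∈ Icc (0:ℝ) 1)
    {gT gF GT GF : Ω → Bool}
    (hgT : Measurable gT) (hgF : Measurable gF) (hGT : Measurable GT) (hGF : Measurable GF)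
    (hmT : 0 < ∫ ω, eT ω ∂μT) (hmF : 0 < ∫ ω, eF ω ∂μF)
    (hmhT : 0 < ∫ ω, ehT ω ∂μT) (hmhF : 0 < ∫ ω, ehF ω ∂μF)
    (hfair : (∫ ω, eT ω * bI (gT ω) ∂μT) / (∫ ω, eT ω ∂μT)
           = (∫ ω, eF ω * bI (gF ω) ∂μF) / (∫ ω, eF ω ∂μF))
    (hbal : (∫ ω, ehT ω * bI (GT ω) ∂μT) / (∫ ω, ehT ω ∂μT)
          = (∫ ω, ehF ω * bI (GF ω) ∂μF) / (∫ ω, ehF ω ∂μF))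
    (hGTdef : ∀ ω, GT ω = true ↔
      0 ≤ pT * (2 * ehT ω - 1) - θ * ehT ω / (∫ ω', ehT ω' ∂μT))
    (hGFdef : ∀ ω, GF ω = true ↔
      0 ≤ pF * (2 * ehF ω - 1) + θ * ehF ω / (∫ ω', ehF ω' ∂μF)) :
    pT * ∫ ω, (2 * eT ω - 1) * bI (gT ω) ∂μT + pF * ∫ ω, (2 * eF ω - 1) * bI (gF ω) ∂μF
      ≤ pT * ∫ ω, (2 * eT ω - 1) * bI (GT ω) ∂μT
        + pF * ∫ ω, (2 * eF ω - 1) * bI (GF ω) ∂μF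
        + (4 + 4 / ∫ ω, eT ω ∂μT) * ∫ ω, |eT ω - ehT ω| ∂μT
        + (4 + 4 / ∫ ω, eF ω ∂μF) * ∫ ω, |eF ω - ehF ω| ∂μF := by
  have hΔT0 : 0 ≤ ∫ ω, |eT ω - ehT ω| ∂μT := integral_nonneg (fun ω => abs_nonneg _)
  have hΔF0 : 0 ≤ ∫ ω, |eF ω - ehF ω| ∂μF := integral_nonneg (fun ω => abs_nonneg _)
  have e1 := diff_bd (μ := μT) hmeT hmehT hgT heT hehT
  have e2 := diff_bd (μ := μF) hmeF hmehF hgF heF hehF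
  have e3 := diff_bd (μ := μT) hmeT hmehT hGT heT hehT
  have e4 := diff_bd (μ := μF) hmeF hmehF hGF heF hehF
  have r1 := ratio_bd (μ := μT) hmeT hmehT hgT heT hehT hmT hmhT
  have r2 := ratio_bd (μ := μF) hmeF hmehF hgF heF hehF hmF hmhF
  have c5 : |θ * ((∫ ω, ehT ω * bI (gT ω) ∂μT) / (∫ ω, ehT ω ∂μT)
        - (∫ ω, eT ω * bI (gT ω) ∂μT) / (∫ ω, eT ω ∂μT))|
      ≤ 4 * (∫ ω, |eT ω - ehT ω| ∂μT) / (∫ ω, eT ω ∂μT) := by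
    rw [abs_mul]
    calc |θ| * _ ≤ 2 * (2 * (∫ ω, |eT ω - ehT ω| ∂μT) / (∫ ω, eT ω ∂μT)) :=
          mul_le_mul hθ r1 (abs_nonneg _) (by norm_num)
      _ = 4 * (∫ ω, |eT ω - ehT ω| ∂μT) / (∫ ω, eT ω ∂μT) := by ring
  have c6 : |θ * ((∫ ω, ehF ω * bI (gF ω) ∂μF) / (∫ ω, ehF ω ∂μF)
        - (∫ ω, eF ω * bI (gF ω) ∂μF) / (∫ ω, eF ω ∂μF))|
      ≤ 4 * (∫ ω, |eF ω - ehF ω| ∂μF) / (∫ ω, eF ω ∂μF) := by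
    rw [abs_mul]
    calc |θ| * _ ≤ 2 * (2 * (∫ ω, |eF ω - ehF ω| ∂μF) / (∫ ω, eF ω ∂μF)) :=
          mul_le_mul hθ r2 (abs_nonneg _) (by norm_num)
      _ = 4 * (∫ ω, |eF ω - ehF ω| ∂μF) / (∫ ω, eF ω ∂μF) := by ring
  -- pointwise maximization
  have meas_aT : Measurable (fun ω => pT * (2 * ehT ω - 1) - θ * ehT ω / (∫ ω', ehT ω' ∂μT)) :=
    (measurable_const.mul ((measurable_const.mul hmehT).sub measurable_const)).sub
      ((measurable_const.mul hmehT).div_const _)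
  have meas_aF : Measurable (fun ω => pF * (2 * ehF ω - 1) + θ * ehF ω / (∫ ω', ehF ω' ∂μF)) :=
    (measurable_const.mul ((measurable_const.mul hmehF).sub measurable_const)).add
      ((measurable_const.mul hmehF).div_const _)
  have habs_aT : ∀ ω, |pT * (2 * ehT ω - 1) - θ * ehT ω / (∫ ω', ehT ω' ∂μT)|
      ≤ 1 + 2 / (∫ ω', ehT ω' ∂μT) := by
    intro ω
    have h1 : |2 * ehT ω - 1| ≤ 1 := by
      have := (hehT ω).1; have := (hehT ω).2
      rw [abs_le]; constructor <;> linarith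
    have h2 : |pT * (2 * ehT ω - 1)| ≤ 1 := by
      rw [abs_mul]
      calc |pT| * |2 * ehT ω - 1| ≤ 1 * 1 :=
            mul_le_mul (abs_le.2 ⟨by linarith, hpT1⟩) h1 (abs_nonneg _) zero_le_one
        _ = 1 := one_mul _
    have habs : |θ * ehT ω| ≤ 2 := by
      rw [abs_mul]
      calc |θ| * |ehT ω| ≤ 2 * 1 :=
            mul_le_mul hθ (abs_le.2 ⟨by linarith [(hehT ω).1], (hehT ω).2⟩)
              (abs_nonneg _) (by norm_num)
        _ = 2 := mul_one _
    have h3 : |θ * ehT ω / (∫ ω', ehT ω' ∂μT)| ≤ 2 / (∫ ω', ehT ω' ∂μT) := by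
      rw [abs_div, abs_of_nonneg hmhT.le]
      exact div_le_div_of_nonneg_right habs hmhT.le
    calc |pT * (2 * ehT ω - 1) - θ * ehT ω / (∫ ω', ehT ω' ∂μT)|
        ≤ |pT * (2 * ehT ω - 1)| + |θ * ehT ω / (∫ ω', ehT ω' ∂μT)| := abs_sub _ _
      _ ≤ 1 + 2 / (∫ ω', ehT ω' ∂μT) := add_le_add h2 h3
  have habs_aF : ∀ ω, |pF * (2 * ehF ω - 1) + θ * ehF ω / (∫ ω', ehF ω' ∂μF)|
      ≤ 1 + 2 / (∫ ω', ehF ω' ∂μF) := by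
    intro ω
    have h1 : |2 * ehF ω - 1| ≤ 1 := by
      have := (hehF ω).1; have := (hehF ω).2
      rw [abs_le]; constructor <;> linarith
    have h2 : |pF * (2 * ehF ω - 1)| ≤ 1 := by
      rw [abs_mul]
      calc |pF| * |2 * ehF ω - 1| ≤ 1 * 1 :=
            mul_le_mul (abs_le.2 ⟨by linarith, hpF1⟩) h1 (abs_nonneg _) zero_le_one
        _ = 1 := one_mul _
    have habs : |θ * ehF ω| ≤ 2 := by
      rw [abs_mul]
      calc |θ| * |ehF ω| ≤ 2 * 1 :=
            mul_le_mul hθ (abs_le.2 ⟨by linarith [(hehF ω).1], (hehF ω).2⟩)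
              (abs_nonneg _) (by norm_num)
        _ = 2 := mul_one _
    have h3 : |θ * ehF ω / (∫ ω', ehF ω' ∂μF)| ≤ 2 / (∫ ω', ehF ω' ∂μF) := by
      rw [abs_div, abs_of_nonneg hmhF.le]
      exact div_le_div_of_nonneg_right habs hmhF.le
    calc |pF * (2 * ehF ω - 1) + θ * ehF ω / (∫ ω', ehF ω' ∂μF)|
        ≤ |pF * (2 * ehF ω - 1)| + |θ * ehF ω / (∫ ω', ehF ω' ∂μF)| := abs_add_le _ _
      _ ≤ 1 + 2 / (∫ ω', ehF ω' ∂μF) := add_le_add h2 h3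
  have intaT : ∀ (c : Ω → Bool), Measurable c →
      Integrable (fun ω => (pT * (2 * ehT ω - 1) - θ * ehT ω / (∫ ω', ehT ω' ∂μT))
        * bI (c ω)) μT := by
    intro c hc
    refine integrable_of_bdd (meas_aT.mul (measurable_bI hc)).aestronglyMeasurable
      (C := 1 + 2 / (∫ ω', ehT ω' ∂μT)) (fun ω => ?_)
    rw [abs_mul]
    calc _ ≤ (1 + 2 / (∫ ω', ehT ω' ∂μT)) * 1 :=
          mul_le_mul (habs_aT ω) (bI_abs_le _) (abs_nonneg _) (by positivity)
      _ = 1 + 2 / (∫ ω', ehT ω' ∂μT) := mul_one _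
  have intaF : ∀ (c : Ω → Bool), Measurable c →
      Integrable (fun ω => (pF * (2 * ehF ω - 1) + θ * ehF ω / (∫ ω', ehF ω' ∂μF))
        * bI (c ω)) μF := by
    intro c hc
    refine integrable_of_bdd (meas_aF.mul (measurable_bI hc)).aestronglyMeasurable
      (C := 1 + 2 / (∫ ω', ehF ω' ∂μF)) (fun ω => ?_)
    rw [abs_mul]
    calc _ ≤ (1 + 2 / (∫ ω', ehF ω' ∂μF)) * 1 :=
          mul_le_mul (habs_aF ω) (bI_abs_le _) (abs_nonneg _) (by positivity)
      _ = 1 + 2 / (∫ ω', ehF ω' ∂μF) := mul_one _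
  have ptT : ∀ ω, (pT * (2 * ehT ω - 1) - θ * ehT ω / (∫ ω', ehT ω' ∂μT)) * bI (gT ω)
      ≤ (pT * (2 * ehT ω - 1) - θ * ehT ω / (∫ ω', ehT ω' ∂μT)) * bI (GT ω) := by
    intro ω
    rcases Bool.eq_false_or_eq_true (GT ω) with h | h
    · have hpos' : 0 ≤ pT * (2 * ehT ω - 1) - θ * ehT ω / (∫ ω', ehT ω' ∂μT) :=
        (hGTdef ω).mp h
      rw [h]
      have h1 : bI true = 1 := by simp [bI]
      rw [h1, mul_one]
      calc _ ≤ (pT * (2 * ehT ω - 1) - θ * ehT ω / (∫ ω', ehT ω' ∂μT)) * 1 :=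
            mul_le_mul_of_nonneg_left (bI_le_one _) hpos'
        _ = _ := mul_one _
    · have hneg : ¬ (0 ≤ pT * (2 * ehT ω - 1) - θ * ehT ω / (∫ ω', ehT ω' ∂μT)) := by
        intro hcon
        have h2 := (hGTdef ω).mpr hcon
        rw [h] at h2; exact Bool.false_ne_true h2
      push_neg at hneg
      rw [h]
      have : bI false = 0 := by simp [bI]
      rw [this, mul_zero]
      exact mul_nonpos_of_nonpos_of_nonneg hneg.le (bI_nonneg _)
  have ptF : ∀ ω, (pF * (2 * ehF ω - 1) + θ * ehF ω / (∫ ω', ehF ω' ∂μF)) * bI (gF ω)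
      ≤ (pF * (2 * ehF ω - 1) + θ * ehF ω / (∫ ω', ehF ω' ∂μF)) * bI (GF ω) := by
    intro ω
    rcases Bool.eq_false_or_eq_true (GF ω) with h | h
    · have hpos' : 0 ≤ pF * (2 * ehF ω - 1) + θ * ehF ω / (∫ ω', ehF ω' ∂μF) :=
        (hGFdef ω).mp h
      rw [h]
      have h1 : bI true = 1 := by simp [bI]
      rw [h1, mul_one]
      calc _ ≤ (pF * (2 * ehF ω - 1) + θ * ehF ω / (∫ ω', ehF ω' ∂μF)) * 1 :=
            mul_le_mul_of_nonneg_left (bI_le_one _) hpos'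
        _ = _ := mul_one _
    · have hneg : ¬ (0 ≤ pF * (2 * ehF ω - 1) + θ * ehF ω / (∫ ω', ehF ω' ∂μF)) := by
        intro hcon
        have h2 := (hGFdef ω).mpr hcon
        rw [h] at h2; exact Bool.false_ne_true h2
      push_neg at hneg
      rw [h]
      have : bI false = 0 := by simp [bI]
      rw [this, mul_zero]
      exact mul_nonpos_of_nonpos_of_nonneg hneg.le (bI_nonneg _)
  have imonoT := integral_mono (intaT gT hgT) (intaT GT hGT) ptT
  have imonoF := integral_mono (intaF gF hgF) (intaF GF hGF) ptF
  have expT : ∀ (c : Ω → Bool), Measurable c →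
      ∫ ω, (pT * (2 * ehT ω - 1) - θ * ehT ω / (∫ ω', ehT ω' ∂μT)) * bI (c ω) ∂μT
        = pT * (∫ ω, (2 * ehT ω - 1) * bI (c ω) ∂μT)
          - (θ / (∫ ω', ehT ω' ∂μT)) * (∫ ω, ehT ω * bI (c ω) ∂μT) := by
    intro c hc
    have hrw : ∀ ω, (pT * (2 * ehT ω - 1) - θ * ehT ω / (∫ ω', ehT ω' ∂μT)) * bI (c ω)
        = pT * ((2 * ehT ω - 1) * bI (c ω))
          - (θ / (∫ ω', ehT ω' ∂μT)) * (ehT ω * bI (c ω)) := fun ω => by ring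
    simp_rw [hrw]
    rw [integral_sub ((int01 hmehT hehT hc).const_mul pT)
      ((int02 hmehT hehT hc).const_mul _), integral_const_mul, integral_const_mul]
  have expF : ∀ (c : Ω → Bool), Measurable c →
      ∫ ω, (pF * (2 * ehF ω - 1) + θ * ehF ω / (∫ ω', ehF ω' ∂μF)) * bI (c ω) ∂μF
        = pF * (∫ ω, (2 * ehF ω - 1) * bI (c ω) ∂μF)
          + (θ / (∫ ω', ehF ω' ∂μF)) * (∫ ω, ehF ω * bI (c ω) ∂μF) := by
    intro c hc
    have hrw : ∀ ω, (pF * (2 * ehF ω - 1) + θ * ehF ω / (∫ ω', ehF ω' ∂μF)) * bI (c ω)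
        = pF * ((2 * ehF ω - 1) * bI (c ω))
          + (θ / (∫ ω', ehF ω' ∂μF)) * (ehF ω * bI (c ω)) := fun ω => by ring
    simp_rw [hrw]
    rw [integral_add ((int01 hmehF hehF hc).const_mul pF)
      ((int02 hmehF hehF hc).const_mul _), integral_const_mul, integral_const_mul]
  rw [expT gT hgT, expT GT hGT] at imonoT
  rw [expF gF hgF, expF GF hGF] at imonoF
  exact arith hpT0 hpT1 hpF0 hpF1 hΔT0 hΔF0 e1 e2 e3 e4 c5 c6 imonoT imonoF hfair hbal


end Stmt18

open Stmt18 in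
set_option maxHeartbeats 2000000 in
theorem stmt_18 {d : ℕ} {Ω : Type*} [MeasurableSpace Ω]
    (P : Measure Ω) [IsProbabilityMeasure P]
    (X : Ω → (Fin d → ℝ)) (S Y : Ω → Bool)
    (hX : Measurable X) (hS : Measurable S) (hY : Measurable Y)
    (hSnd : 0 < P {ω | S ω = true} ∧ P {ω | S ω = true} < 1)
    (hYnd : 0 < P {ω | Y ω = true} ∧ P {ω | Y ω = true} < 1)
    (η : (Fin d → ℝ) → Bool → ℝ)
    (hηm : Measurable (fun p : (Fin d → ℝ) × Bool => η p.1 p.2))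
    (hη01 : ∀ x s, η x s ∈ Icc (0:ℝ) 1)
    (hreg : ∀ φ : (Fin d → ℝ) × Bool → ℝ, Measurable φ → (∃ C, ∀ z, |φ z| ≤ C) →
      ∫ ω, (if Y ω then (1:ℝ) else 0) * φ (X ω, S ω) ∂P
        = ∫ ω, η (X ω) (S ω) * φ (X ω, S ω) ∂P)
    -- Assumption 1
    (hcont : ∀ s : Bool, ContinuousOn
      (fun t : ℝ =>
        (ProbabilityTheory.cond P {ω | S ω = s} {ω | η (X ω) (S ω) ≤ t}).toReal)
      (Ioo (0:ℝ) 1))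
    (hhalf : ∀ s : Bool,
      0 < ProbabilityTheory.cond P {ω | S ω = s} {ω | 1 / 2 ≤ η (X ω) s})
    -- an optimal Equal Opportunity classifier g*
    (gs : (Fin d → ℝ) → Bool → Bool)
    (hgsm : Measurable (fun p : (Fin d → ℝ) × Bool => gs p.1 p.2))
    (hgsfair :
      ProbabilityTheory.cond P {ω | S ω = true ∧ Y ω = true} {ω | gs (X ω) (S ω) = true}
        = ProbabilityTheory.cond P {ω | S ω = false ∧ Y ω = true}
            {ω | gs (X ω) (S ω) = true})
    (hgsopt : ∀ g : (Fin d → ℝ) → Bool → Bool,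
      Measurable (fun p : (Fin d → ℝ) × Bool => g p.1 p.2) →
      ProbabilityTheory.cond P {ω | S ω = true ∧ Y ω = true} {ω | g (X ω) (S ω) = true}
        = ProbabilityTheory.cond P {ω | S ω = false ∧ Y ω = true}
            {ω | g (X ω) (S ω) = true} →
      (P {ω | gs (X ω) (S ω) ≠ Y ω}).toReal ≤ (P {ω | g (X ω) (S ω) ≠ Y ω}).toReal)
    -- the sequence of training-sample spaces and estimators
    (T : ℕ → Type*) [∀ n, MeasurableSpace (T n)]
    (Q : ∀ n, Measure (T n)) (hQ : ∀ n, IsProbabilityMeasure (Q n))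
    (ηh : ∀ n, T n → (Fin d → ℝ) → Bool → ℝ)
    (hηhm : ∀ n, Measurable (fun p : T n × ((Fin d → ℝ) × Bool) => ηh n p.1 p.2.1 p.2.2))
    (hηh01 : ∀ n τ x s, ηh n τ x s ∈ Icc (0:ℝ) 1)
    -- (i) L¹-consistency
    (hL1 : ∀ s : Bool, Tendsto
      (fun n => ∫ τ, (∫ ω, |η (X ω) s - ηh n τ (X ω) s|
          ∂(ProbabilityTheory.cond P {ω | S ω = s})) ∂(Q n))
      atTop (nhds 0))
    -- (ii) a.e. positivity of the estimated conditional means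
    (hpos : ∀ n, ∀ᵐ τ ∂(Q n), ∀ s : Bool,
      0 < ∫ ω, ηh n τ (X ω) s ∂(ProbabilityTheory.cond P {ω | S ω = s}))
    -- (iii) the thresholds and pseudo-oracle classifiers
    (θt : ∀ n, T n → ℝ) (hθtm : ∀ n, Measurable (θt n))
    (hθtb : ∀ n τ, θt n τ ∈ Icc (-2 : ℝ) 2)
    (G : ∀ n, T n → (Fin d → ℝ) → Bool → Bool)
    (hGm : ∀ n, Measurable (fun p : T n × ((Fin d → ℝ) × Bool) => G n p.1 p.2.1 p.2.2))
    (hGdef : ∀ n τ x,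
      (G n τ x true = true
        ↔ 0 ≤ (P {ω | S ω = true}).toReal * (2 * ηh n τ x true - 1)
            - θt n τ * ηh n τ x true
              / (∫ ω, ηh n τ (X ω) true ∂(ProbabilityTheory.cond P {ω | S ω = true})))
      ∧ (G n τ x false = true
        ↔ 0 ≤ (P {ω | S ω = false}).toReal * (2 * ηh n τ x false - 1)
            + θt n τ * ηh n τ x false
              / (∫ ω, ηh n τ (X ω) false ∂(ProbabilityTheory.cond P {ω | S ω = false}))))
    (hbal : ∀ n, ∀ᵐ τ ∂(Q n),
      (∫ ω, ηh n τ (X ω) true * (if G n τ (X ω) true then (1:ℝ) else 0)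
          ∂(ProbabilityTheory.cond P {ω | S ω = true}))
        / (∫ ω, ηh n τ (X ω) true ∂(ProbabilityTheory.cond P {ω | S ω = true}))
      = (∫ ω, ηh n τ (X ω) false * (if G n τ (X ω) false then (1:ℝ) else 0)
          ∂(ProbabilityTheory.cond P {ω | S ω = false}))
        / (∫ ω, ηh n τ (X ω) false ∂(ProbabilityTheory.cond P {ω | S ω = false}))) :
    limsup (fun n => ∫ τ, (P {ω | G n τ (X ω) (S ω) ≠ Y ω}).toReal ∂(Q n)) atTop
      ≤ (P {ω | gs (X ω) (S ω) ≠ Y ω}).toReal := by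
  classical
  -- basic set facts
  have hA : ∀ s : Bool, MeasurableSet {ω | S ω = s} := fun s => hS (measurableSet_singleton s)
  have hcompl : {ω | S ω = false} = {ω | S ω = true}ᶜ := by
    ext ω; cases h : S ω <;> simp [h]
  have hPf : P {ω | S ω = false} = 1 - P {ω | S ω = true} := by
    rw [hcompl, measure_compl (hA true) (measure_ne_top P _), measure_univ]
  have hP0 : ∀ s : Bool, P {ω | S ω = s} ≠ 0 := by
    intro s; cases s
    · rw [hPf]
      intro h
      rw [tsub_eq_zero_iff_le] at h
      exact hSnd.2.not_ge h
    · exact hSnd.1.ne'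
  have hprob : ∀ s : Bool, IsProbabilityMeasure (P[|{ω | S ω = s}]) :=
    fun s => cond_isProbabilityMeasure (hP0 s)
  haveI hμT : IsProbabilityMeasure (P[|{ω | S ω = true}]) := hprob true
  haveI hμF : IsProbabilityMeasure (P[|{ω | S ω = false}]) := hprob false
  have hp0 : ∀ s : Bool, 0 < (P {ω | S ω = s}).toReal :=
    fun s => ENNReal.toReal_pos (hP0 s) (measure_ne_top P _)
  have hp1 : ∀ s : Bool, (P {ω | S ω = s}).toReal ≤ 1 := by
    intro s
    rw [← ENNReal.toReal_one]
    exact ENNReal.toReal_mono (by norm_num) prob_le_one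
  -- conditional integral identity
  have condInt : ∀ (s : Bool) (f : Ω → ℝ),
      (P {ω | S ω = s}).toReal * ∫ ω, f ω ∂(P[|{ω | S ω = s}])
        = ∫ ω in {ω | S ω = s}, f ω ∂P := by
    intro s f
    rw [ProbabilityTheory.cond, integral_smul_measure, ENNReal.toReal_inv, smul_eq_mul,
      ← mul_assoc, mul_inv_cancel₀ (ENNReal.toReal_ne_zero.mpr ⟨hP0 s, measure_ne_top P _⟩),
      one_mul]
  -- splitting an integral along S
  have hsplit : ∀ (f : (Fin d → ℝ) → Bool → ℝ),
      Measurable (fun pr : (Fin d → ℝ) × Bool => f pr.1 pr.2) →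
      ∀ (C : ℝ), (∀ x s, |f x s| ≤ C) →
      ∫ ω, f (X ω) (S ω) ∂P
        = (P {ω | S ω = true}).toReal * ∫ ω, f (X ω) true ∂(P[|{ω | S ω = true}])
          + (P {ω | S ω = false}).toReal * ∫ ω, f (X ω) false ∂(P[|{ω | S ω = false}]) := by
    intro f hf C hC
    have hmeas : Measurable fun ω => f (X ω) (S ω) := hf.comp (hX.prodMk hS)
    have hint : Integrable (fun ω => f (X ω) (S ω)) P :=
      integrable_of_bdd hmeas.aestronglyMeasurable (C := C) (fun ω => hC _ _)
    rw [condInt true, condInt false]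
    calc ∫ ω, f (X ω) (S ω) ∂P
        = (∫ ω in {ω | S ω = true}, f (X ω) (S ω) ∂P)
          + ∫ ω in {ω | S ω = true}ᶜ, f (X ω) (S ω) ∂P :=
          (integral_add_compl (hA true) hint).symm
      _ = (∫ ω in {ω | S ω = true}, f (X ω) true ∂P)
          + ∫ ω in {ω | S ω = false}, f (X ω) false ∂P := by
          rw [← hcompl]
          congr 1
          · exact setIntegral_congr_fun (hA true)
              (fun ω hω => by simp only [mem_setOf_eq] at hω; rw [hω])
          · exact setIntegral_congr_fun (hA false)
              (fun ω hω => by simp only [mem_setOf_eq] at hω; rw [hω])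
  -- risk identity
  have hrisk : ∀ (g : (Fin d → ℝ) → Bool → Bool),
      Measurable (fun pr : (Fin d → ℝ) × Bool => g pr.1 pr.2) →
      (P {ω | g (X ω) (S ω) ≠ Y ω}).toReal
        = (P {ω | Y ω = true}).toReal
          - ((P {ω | S ω = true}).toReal
              * ∫ ω, (2 * η (X ω) true - 1) * bI (g (X ω) true) ∂(P[|{ω | S ω = true}])
            + (P {ω | S ω = false}).toReal
              * ∫ ω, (2 * η (X ω) false - 1) * bI (g (X ω) false) ∂(P[|{ω | S ω = false}])) := by
    intro g hg
    have hgm : Measurable fun ω => g (X ω) (S ω) := hg.comp (hX.prodMk hS)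
    have hD : MeasurableSet {ω | g (X ω) (S ω) ≠ Y ω} := by
      have heq : {ω | g (X ω) (S ω) ≠ Y ω}
          = (fun ω => (g (X ω) (S ω), Y ω)) ⁻¹' {p : Bool × Bool | p.1 ≠ p.2} := rfl
      rw [heq]
      exact (hgm.prodMk hY) ((Set.toFinite _).measurableSet)
    have hptw : ∀ ω, ({ω | g (X ω) (S ω) ≠ Y ω}).indicator (fun _ => (1:ℝ)) ω
        = bI (Y ω) + bI (g (X ω) (S ω)) - 2 * (bI (Y ω) * bI (g (X ω) (S ω))) := by
      intro ω
      rcases Bool.eq_false_or_eq_true (Y ω) with hy | hy <;>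
        rcases Bool.eq_false_or_eq_true (g (X ω) (S ω)) with hgg | hgg <;>
        (simp [Set.indicator_apply, bI, hy, hgg, mem_setOf_eq]; try norm_num)
    have hiY : Integrable (fun ω => bI (Y ω)) P :=
      integrable_of_bdd (measurable_bI hY).aestronglyMeasurable (C := 1)
        (fun ω => bI_abs_le _)
    have hig : Integrable (fun ω => bI (g (X ω) (S ω))) P :=
      integrable_of_bdd (measurable_bI hgm).aestronglyMeasurable (C := 1)
        (fun ω => bI_abs_le _)
    have hiYg : Integrable (fun ω => bI (Y ω) * bI (g (X ω) (S ω))) P :=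
      integrable_of_bdd ((measurable_bI hY).mul (measurable_bI hgm)).aestronglyMeasurable
        (C := 1) (fun ω => by
          rw [abs_mul]
          calc |bI (Y ω)| * |bI (g (X ω) (S ω))| ≤ 1 * 1 :=
                mul_le_mul (bI_abs_le _) (bI_abs_le _) (abs_nonneg _) zero_le_one
            _ = 1 := one_mul _)
    have hηgm : Measurable fun ω => η (X ω) (S ω) := hηm.comp (hX.prodMk hS)
    have hiηg : Integrable (fun ω => η (X ω) (S ω) * bI (g (X ω) (S ω))) P :=
      integrable_of_bdd (hηgm.mul (measurable_bI hgm)).aestronglyMeasurable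
        (C := 1) (fun ω => by
          rw [abs_mul]
          calc |η (X ω) (S ω)| * |bI (g (X ω) (S ω))| ≤ 1 * 1 :=
                mul_le_mul (abs_le.2 ⟨by linarith [(hη01 (X ω) (S ω)).1],
                  (hη01 (X ω) (S ω)).2⟩) (bI_abs_le _) (abs_nonneg _) zero_le_one
            _ = 1 := one_mul _)
    -- step 1 : risk as integral
    have h1 : (P {ω | g (X ω) (S ω) ≠ Y ω}).toReal
        = ∫ ω, bI (Y ω) ∂P + ∫ ω, bI (g (X ω) (S ω)) ∂P
          - 2 * ∫ ω, bI (Y ω) * bI (g (X ω) (S ω)) ∂P := by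
      rw [← measureReal_def, ← integral_indicator_one hD]
      have : ∫ ω, ({ω | g (X ω) (S ω) ≠ Y ω}).indicator 1 ω ∂P
          = ∫ ω, (bI (Y ω) + bI (g (X ω) (S ω))
              - 2 * (bI (Y ω) * bI (g (X ω) (S ω)))) ∂P :=
        integral_congr_ae (Filter.Eventually.of_forall (fun ω => hptw ω))
      have hsum : Integrable (fun ω => bI (Y ω) + bI (g (X ω) (S ω))) P := hiY.add hig
      have hc2 : Integrable (fun ω => 2 * (bI (Y ω) * bI (g (X ω) (S ω)))) P :=
        hiYg.const_mul 2
      rw [this, integral_sub hsum hc2, integral_add hiY hig, integral_const_mul]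
    -- step 2 : regression property
    have h2 : ∫ ω, bI (Y ω) * bI (g (X ω) (S ω)) ∂P
        = ∫ ω, η (X ω) (S ω) * bI (g (X ω) (S ω)) ∂P :=
      hreg (fun pr => bI (g pr.1 pr.2)) (measurable_bI hg) ⟨1, fun z => bI_abs_le _⟩
    -- step 3 : ∫ bI Y = P(Y=1)
    have h3 : ∫ ω, bI (Y ω) ∂P = (P {ω | Y ω = true}).toReal := by
      have hYt : MeasurableSet {ω | Y ω = true} := hY (measurableSet_singleton true)
      rw [← measureReal_def, ← integral_indicator_one hYt]
      refine integral_congr_ae (Filter.Eventually.of_forall (fun ω => ?_))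
      rcases Bool.eq_false_or_eq_true (Y ω) with hy | hy <;>
        simp [Set.indicator_apply, bI, hy, mem_setOf_eq]
    -- step 4 : combine 2η-1
    have h4 : ∫ ω, (2 * η (X ω) (S ω) - 1) * bI (g (X ω) (S ω)) ∂P
        = 2 * ∫ ω, η (X ω) (S ω) * bI (g (X ω) (S ω)) ∂P
          - ∫ ω, bI (g (X ω) (S ω)) ∂P := by
      have hr : ∀ ω, (2 * η (X ω) (S ω) - 1) * bI (g (X ω) (S ω))
          = 2 * (η (X ω) (S ω) * bI (g (X ω) (S ω))) - bI (g (X ω) (S ω)) := by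
        intro ω; ring
      simp_rw [hr]
      rw [integral_sub (hiηg.const_mul 2) hig, integral_const_mul]
    -- step 5 : split
    have h5 : ∫ ω, (2 * η (X ω) (S ω) - 1) * bI (g (X ω) (S ω)) ∂P
        = (P {ω | S ω = true}).toReal
            * ∫ ω, (2 * η (X ω) true - 1) * bI (g (X ω) true) ∂(P[|{ω | S ω = true}])
          + (P {ω | S ω = false}).toReal
            * ∫ ω, (2 * η (X ω) false - 1) * bI (g (X ω) false) ∂(P[|{ω | S ω = false}]) := by
      refine hsplit (fun x s => (2 * η x s - 1) * bI (g x s))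
        (((measurable_const.mul hηm).sub measurable_const).mul (measurable_bI hg)) 1
        (fun x s => ?_)
      rw [abs_mul]
      have hb : |2 * η x s - 1| ≤ 1 := by
        have := (hη01 x s).1; have := (hη01 x s).2
        rw [abs_le]; constructor <;> linarith
      calc |2 * η x s - 1| * |bI (g x s)| ≤ 1 * 1 :=
            mul_le_mul hb (bI_abs_le _) (abs_nonneg _) zero_le_one
        _ = 1 := one_mul _
    rw [h1, h2, h3]
    linarith [h4, h5]
  -- measurable slices of η
  have hηs : ∀ s : Bool, Measurable (fun ω => η (X ω) s) :=
    fun s => hηm.comp (hX.prodMk measurable_const)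
  -- positivity of the conditional means of η
  have hm : ∀ s : Bool, 0 < ∫ ω, η (X ω) s ∂(P[|{ω | S ω = s}]) := by
    intro s
    haveI := hprob s
    have hBm : MeasurableSet {ω | 1 / 2 ≤ η (X ω) s} :=
      measurableSet_le measurable_const (hηs s)
    have hμB : 0 < ((P[|{ω | S ω = s}]) {ω | 1 / 2 ≤ η (X ω) s}).toReal :=
      ENNReal.toReal_pos (hhalf s).ne' (measure_ne_top _ _)
    have hint : Integrable (fun ω => η (X ω) s) (P[|{ω | S ω = s}]) :=
      int03 (hηs s) (fun ω => hη01 _ _)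
    calc (0:ℝ) < (1/2) * ((P[|{ω | S ω = s}]) {ω | 1 / 2 ≤ η (X ω) s}).toReal := by
          positivity
      _ ≤ ∫ ω in {ω | 1 / 2 ≤ η (X ω) s}, η (X ω) s ∂(P[|{ω | S ω = s}]) :=
          by
            have := setIntegral_ge_of_const_le hBm (measure_ne_top _ _)
              (fun ω hω => hω) hint.integrableOn
            rw [smul_eq_mul, measureReal_def] at this
            linarith
      _ ≤ ∫ ω, η (X ω) s ∂(P[|{ω | S ω = s}]) :=
          setIntegral_le_integral hint
            (Filter.Eventually.of_forall (fun ω => (hη01 _ _).1))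
  -- fairness of gs in real terms
  have hfair_real :
      (∫ ω, η (X ω) true * bI (gs (X ω) true) ∂(P[|{ω | S ω = true}]))
          / (∫ ω, η (X ω) true ∂(P[|{ω | S ω = true}]))
        = (∫ ω, η (X ω) false * bI (gs (X ω) false) ∂(P[|{ω | S ω = false}]))
          / (∫ ω, η (X ω) false ∂(P[|{ω | S ω = false}])) := by
    have hgsc : Measurable fun ω => gs (X ω) (S ω) := hgsm.comp (hX.prodMk hS)
    have hE : ∀ s : Bool, MeasurableSet {ω | S ω = s ∧ Y ω = true} := by
      intro s
      have heq : {ω | S ω = s ∧ Y ω = true}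
          = {ω | S ω = s} ∩ {ω | Y ω = true} := rfl
      rw [heq]
      exact (hA s).inter (hY (measurableSet_singleton true))
    -- toReal of P(E s)
    have hPE : ∀ s : Bool, (P {ω | S ω = s ∧ Y ω = true}).toReal
        = (P {ω | S ω = s}).toReal * ∫ ω, η (X ω) s ∂(P[|{ω | S ω = s}]) := by
      intro s
      have hphi : Measurable (fun pr : (Fin d → ℝ) × Bool => if pr.2 = s then (1:ℝ) else 0) := by
        refine Measurable.ite ?_ measurable_const measurable_const
        exact measurable_snd (measurableSet_singleton s)
      have h0 : (P {ω | S ω = s ∧ Y ω = true}).toReal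
          = ∫ ω, (if Y ω then (1:ℝ) else 0) * (if S ω = s then (1:ℝ) else 0) ∂P := by
        rw [← measureReal_def, ← integral_indicator_one (hE s)]
        refine integral_congr_ae (Filter.Eventually.of_forall (fun ω => ?_))
        rcases Bool.eq_false_or_eq_true (Y ω) with hy | hy <;>
          rcases Bool.eq_false_or_eq_true (S ω) with hs | hs <;> cases s <;>
          (simp [Set.indicator_apply, hy, hs, mem_setOf_eq]; try norm_num)
      have h1 := hreg (fun pr => if pr.2 = s then (1:ℝ) else 0) hphi
        ⟨1, fun z => by by_cases h : z.2 = s <;> simp [h]⟩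
      have h2 := hsplit (fun x t => η x t * (if t = s then (1:ℝ) else 0))
        (hηm.mul hphi) 1 (fun x t => by
          rw [abs_mul]
          have h3 : |η x t| ≤ 1 :=
            abs_le.2 ⟨by linarith [(hη01 x t).1], (hη01 x t).2⟩
          have h4 : |(if t = s then (1:ℝ) else 0)| ≤ 1 := by split <;> norm_num
          calc |η x t| * |(if t = s then (1:ℝ) else 0)| ≤ 1 * 1 :=
                mul_le_mul h3 h4 (abs_nonneg _) zero_le_one
            _ = 1 := one_mul _)
      rw [h0, h1, h2]
      cases s
      · simp
      · simp
    -- toReal of P(E s ∩ B)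
    have hPEB : ∀ s : Bool,
        (P ({ω | S ω = s ∧ Y ω = true} ∩ {ω | gs (X ω) (S ω) = true})).toReal
        = (P {ω | S ω = s}).toReal
            * ∫ ω, η (X ω) s * bI (gs (X ω) s) ∂(P[|{ω | S ω = s}]) := by
      intro s
      have hphi : Measurable (fun pr : (Fin d → ℝ) × Bool =>
          (if pr.2 = s then (1:ℝ) else 0) * bI (gs pr.1 pr.2)) := by
        refine Measurable.mul ?_ (measurable_bI hgsm)
        refine Measurable.ite ?_ measurable_const measurable_const
        exact measurable_snd (measurableSet_singleton s)
      have hEB : MeasurableSet ({ω | S ω = s ∧ Y ω = true} ∩ {ω | gs (X ω) (S ω) = true}) :=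
        (hE s).inter (hgsc (measurableSet_singleton true))
      have h0 : (P ({ω | S ω = s ∧ Y ω = true} ∩ {ω | gs (X ω) (S ω) = true})).toReal
          = ∫ ω, (if Y ω then (1:ℝ) else 0)
              * ((if S ω = s then (1:ℝ) else 0) * bI (gs (X ω) (S ω))) ∂P := by
        rw [← measureReal_def, ← integral_indicator_one hEB]
        refine integral_congr_ae (Filter.Eventually.of_forall (fun ω => ?_))
        rcases Bool.eq_false_or_eq_true (Y ω) with hy | hy <;>
          rcases Bool.eq_false_or_eq_true (S ω) with hs | hs <;>
          rcases Bool.eq_false_or_eq_true (gs (X ω) (S ω)) with hg | hg <;> cases s <;>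
          (simp [Set.indicator_apply, bI, hy, hs, hg, mem_setOf_eq]; try norm_num)
      have h1 := hreg (fun pr => (if pr.2 = s then (1:ℝ) else 0) * bI (gs pr.1 pr.2)) hphi
        ⟨1, fun z => by
          rw [abs_mul]
          have h4 : |(if z.2 = s then (1:ℝ) else 0)| ≤ 1 := by split <;> norm_num
          calc |(if z.2 = s then (1:ℝ) else 0)| * |bI (gs z.1 z.2)| ≤ 1 * 1 :=
                mul_le_mul h4 (bI_abs_le _) (abs_nonneg _) zero_le_one
            _ = 1 := one_mul _⟩
      have h2 := hsplit (fun x t => η x t * ((if t = s then (1:ℝ) else 0) * bI (gs x t)))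
        (hηm.mul hphi) 1 (fun x t => by
          rw [abs_mul, abs_mul]
          have h3 : |η x t| ≤ 1 :=
            abs_le.2 ⟨by linarith [(hη01 x t).1], (hη01 x t).2⟩
          have h4 : |(if t = s then (1:ℝ) else 0)| ≤ 1 := by split <;> norm_num
          calc |η x t| * (|(if t = s then (1:ℝ) else 0)| * |bI (gs x t)|)
              ≤ 1 * (1 * 1) := by
                refine mul_le_mul h3 ?_ (by positivity) zero_le_one
                exact mul_le_mul h4 (bI_abs_le _) (abs_nonneg _) zero_le_one
            _ = 1 := by norm_num)
      rw [h0, h1, h2]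
      cases s
      · simp
      · simp
    -- translate hgsfair
    have h1 := hgsfair
    rw [cond_apply (hE true), cond_apply (hE false)] at h1
    have h2 := congrArg ENNReal.toReal h1
    rw [ENNReal.toReal_mul, ENNReal.toReal_mul, ENNReal.toReal_inv, ENNReal.toReal_inv,
      hPE true, hPE false, hPEB true, hPEB false] at h2
    have hkey : ∀ (p m u : ℝ), 0 < p → 0 < m →
        (p * m)⁻¹ * (p * u) = u / m := by
      intro p m u hp hm
      field_simp
    rw [hkey _ _ _ (hp0 true) (hm true), hkey _ _ _ (hp0 false) (hm false)] at h2
    exact h2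
  -- the per-n integrated inequality
  have key : ∀ n : ℕ,
      ∫ τ, (P {ω | G n τ (X ω) (S ω) ≠ Y ω}).toReal ∂(Q n)
        ≤ (P {ω | gs (X ω) (S ω) ≠ Y ω}).toReal
          + (4 + 4 / ∫ ω, η (X ω) true ∂(P[|{ω | S ω = true}]))
              * ∫ τ, (∫ ω, |η (X ω) true - ηh n τ (X ω) true|
                  ∂(P[|{ω | S ω = true}])) ∂(Q n)
          + (4 + 4 / ∫ ω, η (X ω) false ∂(P[|{ω | S ω = false}]))
              * ∫ τ, (∫ ω, |η (X ω) false - ηh n τ (X ω) false|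
                  ∂(P[|{ω | S ω = false}])) ∂(Q n) := by
    intro n
    haveI := hQ n
    -- measurability in τ of the risk
    have hGp : Measurable fun p : T n × Ω => G n p.1 (X p.2) (S p.2) :=
      (hGm n).comp (measurable_fst.prodMk
        ((hX.comp measurable_snd).prodMk (hS.comp measurable_snd)))
    have hsetm : MeasurableSet {p : T n × Ω | G n p.1 (X p.2) (S p.2) ≠ Y p.2} := by
      have heq : {p : T n × Ω | G n p.1 (X p.2) (S p.2) ≠ Y p.2}
          = (fun p : T n × Ω => (G n p.1 (X p.2) (S p.2), Y p.2))
              ⁻¹' {q : Bool × Bool | q.1 ≠ q.2} := rfl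
      rw [heq]
      exact (hGp.prodMk (hY.comp measurable_snd)) ((Set.toFinite _).measurableSet)
    have hrn_meas : Measurable fun τ => (P {ω | G n τ (X ω) (S ω) ≠ Y ω}).toReal :=
      (measurable_measure_prodMk_left hsetm).ennreal_toReal
    have hrn_int : Integrable (fun τ => (P {ω | G n τ (X ω) (S ω) ≠ Y ω}).toReal) (Q n) :=
      integrable_of_bdd hrn_meas.aestronglyMeasurable (C := 1) (fun τ => by
        rw [abs_of_nonneg ENNReal.toReal_nonneg, ← ENNReal.toReal_one]
        exact ENNReal.toReal_mono (by norm_num) prob_le_one)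
    -- measurability and integrability of the Δ's
    have hΔmeas : ∀ s : Bool, Measurable
        (fun τ => ∫ ω, |η (X ω) s - ηh n τ (X ω) s| ∂(P[|{ω | S ω = s}])) := by
      intro s
      haveI := hprob s
      have hf : StronglyMeasurable (fun p : T n × Ω => |η (X p.2) s - ηh n p.1 (X p.2) s|) := by
        apply Measurable.stronglyMeasurable
        apply Measurable.abs
        exact (hηm.comp ((hX.comp measurable_snd).prodMk measurable_const)).sub
          ((hηhm n).comp (measurable_fst.prodMk
            ((hX.comp measurable_snd).prodMk measurable_const)))
      exact (MeasureTheory.StronglyMeasurable.integral_prod_right' hf).measurable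
    have hΔint : ∀ s : Bool, Integrable
        (fun τ => ∫ ω, |η (X ω) s - ηh n τ (X ω) s| ∂(P[|{ω | S ω = s}])) (Q n) := by
      intro s
      haveI := hprob s
      refine integrable_of_bdd (hΔmeas s).aestronglyMeasurable (C := 2) (fun τ => ?_)
      have h0 : (0:ℝ) ≤ ∫ ω, |η (X ω) s - ηh n τ (X ω) s| ∂(P[|{ω | S ω = s}]) :=
        integral_nonneg (fun ω => abs_nonneg _)
      rw [abs_of_nonneg h0]
      have hint : Integrable (fun ω => |η (X ω) s - ηh n τ (X ω) s|) (P[|{ω | S ω = s}]) :=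
        int04 (hηs s) ((hηhm n).comp (measurable_prodMk_left)
          |>.comp (hX.prodMk measurable_const)) (fun ω => hη01 _ _) (fun ω => hηh01 _ _ _ _)
      calc ∫ ω, |η (X ω) s - ηh n τ (X ω) s| ∂(P[|{ω | S ω = s}])
          ≤ ∫ _ω, (2:ℝ) ∂(P[|{ω | S ω = s}]) := by
            refine integral_mono hint (integrable_const 2) (fun ω => ?_)
            have := (hη01 (X ω) s).1; have := (hη01 (X ω) s).2
            have := (hηh01 n τ (X ω) s).1; have := (hηh01 n τ (X ω) s).2
            rw [abs_le]; constructor <;> linarith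
        _ = 2 := by simp
    -- a.e. pointwise bound
    have hae : ∀ᵐ τ ∂(Q n),
        (P {ω | G n τ (X ω) (S ω) ≠ Y ω}).toReal
          ≤ (P {ω | gs (X ω) (S ω) ≠ Y ω}).toReal
            + (4 + 4 / ∫ ω, η (X ω) true ∂(P[|{ω | S ω = true}]))
                * ∫ ω, |η (X ω) true - ηh n τ (X ω) true| ∂(P[|{ω | S ω = true}])
            + (4 + 4 / ∫ ω, η (X ω) false ∂(P[|{ω | S ω = false}]))
                * ∫ ω, |η (X ω) false - ηh n τ (X ω) false| ∂(P[|{ω | S ω = false}]) := by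
      filter_upwards [hpos n, hbal n] with τ hposτ hbalτ
      have hGsl : Measurable (fun pr : (Fin d → ℝ) × Bool => G n τ pr.1 pr.2) :=
        (hGm n).comp measurable_prodMk_left
      have hητ : Measurable (fun pr : (Fin d → ℝ) × Bool => ηh n τ pr.1 pr.2) :=
        (hηhm n).comp measurable_prodMk_left
      have hθabs : |θt n τ| ≤ 2 := abs_le.2 ⟨(hθtb n τ).1, (hθtb n τ).2⟩
      have hcore := core (Ω := Ω) (P[|{ω | S ω = true}]) (P[|{ω | S ω = false}])
        (pT := (P {ω | S ω = true}).toReal) (pF := (P {ω | S ω = false}).toReal)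
        (θ := θt n τ)
        (hp0 true).le (hp1 true) (hp0 false).le (hp1 false) hθabs
        (eT := fun ω => η (X ω) true) (eF := fun ω => η (X ω) false)
        (ehT := fun ω => ηh n τ (X ω) true) (ehF := fun ω => ηh n τ (X ω) false)
        (hηs true) (hηs false)
        (hητ.comp (hX.prodMk measurable_const)) (hητ.comp (hX.prodMk measurable_const))
        (fun ω => hη01 _ _) (fun ω => hη01 _ _) (fun ω => hηh01 _ _ _ _) (fun ω => hηh01 _ _ _ _)
        (gT := fun ω => gs (X ω) true) (gF := fun ω => gs (X ω) false)
        (GT := fun ω => G n τ (X ω) true) (GF := fun ω => G n τ (X ω) false)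
        (hgsm.comp (hX.prodMk measurable_const)) (hgsm.comp (hX.prodMk measurable_const))
        (hGsl.comp (hX.prodMk measurable_const)) (hGsl.comp (hX.prodMk measurable_const))
        (hm true) (hm false) (hposτ true) (hposτ false)
        hfair_real hbalτ
        (fun ω => (hGdef n τ (X ω)).1) (fun ω => (hGdef n τ (X ω)).2)
      have hRG := hrisk (G n τ) hGsl
      have hRg := hrisk gs hgsm
      linarith only [hcore, hRG, hRg]
    -- integrate the bound over τ
    have hRHSint : Integrable (fun τ =>
        (P {ω | gs (X ω) (S ω) ≠ Y ω}).toReal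
          + (4 + 4 / ∫ ω, η (X ω) true ∂(P[|{ω | S ω = true}]))
              * ∫ ω, |η (X ω) true - ηh n τ (X ω) true| ∂(P[|{ω | S ω = true}])
          + (4 + 4 / ∫ ω, η (X ω) false ∂(P[|{ω | S ω = false}]))
              * ∫ ω, |η (X ω) false - ηh n τ (X ω) false| ∂(P[|{ω | S ω = false}])) (Q n) :=
      (((integrable_const _).add ((hΔint true).const_mul _)).add ((hΔint false).const_mul _))
    calc ∫ τ, (P {ω | G n τ (X ω) (S ω) ≠ Y ω}).toReal ∂(Q n)
        ≤ ∫ τ, ((P {ω | gs (X ω) (S ω) ≠ Y ω}).toReal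
            + (4 + 4 / ∫ ω, η (X ω) true ∂(P[|{ω | S ω = true}]))
                * ∫ ω, |η (X ω) true - ηh n τ (X ω) true| ∂(P[|{ω | S ω = true}])
            + (4 + 4 / ∫ ω, η (X ω) false ∂(P[|{ω | S ω = false}]))
                * ∫ ω, |η (X ω) false - ηh n τ (X ω) false| ∂(P[|{ω | S ω = false}])) ∂(Q n) :=
          integral_mono_ae hrn_int hRHSint hae
      _ = (P {ω | gs (X ω) (S ω) ≠ Y ω}).toReal
            + (4 + 4 / ∫ ω, η (X ω) true ∂(P[|{ω | S ω = true}]))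
                * ∫ τ, (∫ ω, |η (X ω) true - ηh n τ (X ω) true|
                    ∂(P[|{ω | S ω = true}])) ∂(Q n)
            + (4 + 4 / ∫ ω, η (X ω) false ∂(P[|{ω | S ω = false}]))
                * ∫ τ, (∫ ω, |η (X ω) false - ηh n τ (X ω) false|
                    ∂(P[|{ω | S ω = false}])) ∂(Q n) := by
          have ic : Integrable (fun _τ : T n =>
              (P {ω | gs (X ω) (S ω) ≠ Y ω}).toReal) (Q n) := integrable_const _
          have i2 : Integrable (fun τ =>
              (4 + 4 / ∫ ω, η (X ω) true ∂(P[|{ω | S ω = true}]))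
                * ∫ ω, |η (X ω) true - ηh n τ (X ω) true| ∂(P[|{ω | S ω = true}])) (Q n) :=
            (hΔint true).const_mul _
          have i3 : Integrable (fun τ =>
              (4 + 4 / ∫ ω, η (X ω) false ∂(P[|{ω | S ω = false}]))
                * ∫ ω, |η (X ω) false - ηh n τ (X ω) false| ∂(P[|{ω | S ω = false}])) (Q n) :=
            (hΔint false).const_mul _
          have i12 : Integrable (fun τ =>
              (P {ω | gs (X ω) (S ω) ≠ Y ω}).toReal
                + (4 + 4 / ∫ ω, η (X ω) true ∂(P[|{ω | S ω = true}]))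
                  * ∫ ω, |η (X ω) true - ηh n τ (X ω) true| ∂(P[|{ω | S ω = true}])) (Q n) :=
            ic.add i2
          rw [integral_add i12 i3, integral_add ic i2,
            integral_const, integral_const_mul, integral_const_mul]
          simp [measure_univ]
  -- pass to the limit superior
  have htend : Tendsto (fun n =>
      (P {ω | gs (X ω) (S ω) ≠ Y ω}).toReal
        + (4 + 4 / ∫ ω, η (X ω) true ∂(P[|{ω | S ω = true}]))
            * ∫ τ, (∫ ω, |η (X ω) true - ηh n τ (X ω) true|
                ∂(P[|{ω | S ω = true}])) ∂(Q n)
        + (4 + 4 / ∫ ω, η (X ω) false ∂(P[|{ω | S ω = false}]))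
            * ∫ τ, (∫ ω, |η (X ω) false - ηh n τ (X ω) false|
                ∂(P[|{ω | S ω = false}])) ∂(Q n))
      atTop (nhds ((P {ω | gs (X ω) (S ω) ≠ Y ω}).toReal)) := by
    have h1 := (hL1 true).const_mul (4 + 4 / ∫ ω, η (X ω) true ∂(P[|{ω | S ω = true}]))
    have h2 := (hL1 false).const_mul (4 + 4 / ∫ ω, η (X ω) false ∂(P[|{ω | S ω = false}]))
    have h3 := (tendsto_const_nhds (x := (P {ω | gs (X ω) (S ω) ≠ Y ω}).toReal)
      (f := atTop (α := ℕ))).add (h1.add h2)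
    simp only [mul_zero, add_zero] at h3
    convert h3 using 2 with n
    ring
  have hcobdd : IsCoboundedUnder (· ≤ ·) atTop
      (fun n => ∫ τ, (P {ω | G n τ (X ω) (S ω) ≠ Y ω}).toReal ∂(Q n)) := by
    refine isCoboundedUnder_le_of_le atTop (x := 0) (fun n => ?_)
    exact integral_nonneg (fun τ => ENNReal.toReal_nonneg)
  calc limsup (fun n => ∫ τ, (P {ω | G n τ (X ω) (S ω) ≠ Y ω}).toReal ∂(Q n)) atTop
      ≤ limsup (fun n =>
          (P {ω | gs (X ω) (S ω) ≠ Y ω}).toReal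
            + (4 + 4 / ∫ ω, η (X ω) true ∂(P[|{ω | S ω = true}]))
                * ∫ τ, (∫ ω, |η (X ω) true - ηh n τ (X ω) true|
                    ∂(P[|{ω | S ω = true}])) ∂(Q n)
            + (4 + 4 / ∫ ω, η (X ω) false ∂(P[|{ω | S ω = false}]))
                * ∫ τ, (∫ ω, |η (X ω) false - ηh n τ (X ω) false|
                    ∂(P[|{ω | S ω = false}])) ∂(Q n)) atTop :=
        limsup_le_limsup (Filter.Eventually.of_forall key) hcobdd
          htend.isBoundedUnder_le
    _ = (P {ω | gs (X ω) (S ω) ≠ Y ω}).toReal := htend.limsup_eq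
end
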